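/- arXiv:1109.3229 — 3 statements merged into one kernel-verified Lean document; each statement's English description precedes it below -/
import Mathlib

section
/- The number of Hurwitz integers p such that p·q⁻¹ lies in the closure of the fundamental domain Δ = [0,1)³ × [0,1/2) is asymptotic to |q|₂⁴; in particular it is bounded above and below by positive constant multiples of |q|₂⁴ for all nonzero Hurwitz integers q with |q|₂ sufficiently large. -/
open MeasureTheory Metric Filter Set Quaternion

noncomputable instance : MeasurableSpace (Quaternion ℝ) := borel _
instance : BorelSpace (Quaternion ℝ) := ⟨rfl⟩

/-- Lebesgue measure on the quaternions, transported from `ℝ⁴`. -/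
noncomputable instance : MeasureSpace (Quaternion ℝ) :=
  ⟨Measure.map (Quaternion.equivTuple ℝ).symm volume⟩

/-- A quaternion is a Hurwitz integer if all its coordinates are integers or
all its coordinates are in `ℤ + 1/2`. -/
def IsHurwitz (x : Quaternion ℝ) : Prop :=
  (∃ a b c d : ℤ, x.re = a ∧ x.imI = b ∧ x.imJ = c ∧ x.imK = d) ∨
  (∃ a b c d : ℤ, x.re = a + 1/2 ∧ x.imI = b + 1/2 ∧ x.imJ = c + 1/2 ∧ x.imK = d + 1/2)

/-- The fundamental domain `Δ = [0,1)³ × [0,1/2)` for Hurwitz translations. -/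
def fundDom : Set (Quaternion ℝ) :=
  {x | 0 ≤ x.re ∧ x.re < 1 ∧ 0 ≤ x.imI ∧ x.imI < 1 ∧ 0 ≤ x.imJ ∧ x.imJ < 1 ∧
    0 ≤ x.imK ∧ x.imK < 1/2}

/-- The closed fundamental domain `Δ̄ = [0,1]³ × [0,1/2]`. -/
def fundDomCl : Set (Quaternion ℝ) :=
  {x | 0 ≤ x.re ∧ x.re ≤ 1 ∧ 0 ≤ x.imI ∧ x.imI ≤ 1 ∧ 0 ≤ x.imJ ∧ x.imJ ≤ 1 ∧
    0 ≤ x.imK ∧ x.imK ≤ 1/2}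

noncomputable def e4 : (Fin 4 → ℝ) ≃L[ℝ] Quaternion ℝ :=
  LinearEquiv.toContinuousLinearEquiv (QuaternionAlgebra.linearEquivTuple (-1:ℝ) 0 (-1)).symm

lemma e4_eq : ⇑e4 = ⇑(Quaternion.equivTuple ℝ).symm := rfl

lemma vol_eq : (volume : Measure (Quaternion ℝ)) = Measure.map e4 volume := by
  rw [e4_eq]; rfl

instance : (volume : Measure (Quaternion ℝ)).IsAddHaarMeasure := by
  rw [vol_eq]; infer_instance

lemma meas_re : Measurable fun x : Quaternion ℝ => x.re := Quaternion.continuous_re.measurable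
lemma meas_imI : Measurable fun x : Quaternion ℝ => x.imI := Quaternion.continuous_imI.measurable
lemma meas_imJ : Measurable fun x : Quaternion ℝ => x.imJ := Quaternion.continuous_imJ.measurable
lemma meas_imK : Measurable fun x : Quaternion ℝ => x.imK := Quaternion.continuous_imK.measurable

lemma box_meas (s : Fin 4 → Set ℝ) (hs : ∀ i, MeasurableSet (s i)) :
    MeasurableSet {x : Quaternion ℝ | x.re ∈ s 0 ∧ x.imI ∈ s 1 ∧ x.imJ ∈ s 2 ∧ x.imK ∈ s 3} := by
  have : {x : Quaternion ℝ | x.re ∈ s 0 ∧ x.imI ∈ s 1 ∧ x.imJ ∈ s 2 ∧ x.imK ∈ s 3}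
      = (fun x : Quaternion ℝ => x.re) ⁻¹' s 0 ∩ ((fun x : Quaternion ℝ => x.imI) ⁻¹' s 1 ∩
        ((fun x : Quaternion ℝ => x.imJ) ⁻¹' s 2 ∩ (fun x : Quaternion ℝ => x.imK) ⁻¹' s 3)) := by
    ext x; simp [and_assoc]
  rw [this]
  exact (meas_re (hs 0)).inter ((meas_imI (hs 1)).inter ((meas_imJ (hs 2)).inter (meas_imK (hs 3))))

lemma vol_box (s : Fin 4 → Set ℝ) (hs : ∀ i, MeasurableSet (s i)) :
    volume {x : Quaternion ℝ | x.re ∈ s 0 ∧ x.imI ∈ s 1 ∧ x.imJ ∈ s 2 ∧ x.imK ∈ s 3}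
      = ∏ i, volume (s i) := by
  rw [show (volume : Measure (Quaternion ℝ))
      = Measure.map (⇑(Quaternion.equivTuple ℝ).symm) volume from rfl,
    Measure.map_apply (by rw [← e4_eq]; exact e4.continuous.measurable) (box_meas s hs)]
  have : (⇑(Quaternion.equivTuple ℝ).symm) ⁻¹'
      {x : Quaternion ℝ | x.re ∈ s 0 ∧ x.imI ∈ s 1 ∧ x.imJ ∈ s 2 ∧ x.imK ∈ s 3}
      = Set.univ.pi s := by
    ext v
    constructor
    · rintro ⟨h0, h1, h2, h3⟩ i _
      fin_cases i <;> assumption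
    · intro h
      exact ⟨h 0 trivial, h 1 trivial, h 2 trivial, h 3 trivial⟩
  rw [this, volume_pi_pi]

def qmk (a b c d : ℝ) : Quaternion ℝ := ⟨a, b, c, d⟩
@[simp] lemma qmk_re (a b c d : ℝ) : (qmk a b c d).re = a := rfl
@[simp] lemma qmk_imI (a b c d : ℝ) : (qmk a b c d).imI = b := rfl
@[simp] lemma qmk_imJ (a b c d : ℝ) : (qmk a b c d).imJ = c := rfl
@[simp] lemma qmk_imK (a b c d : ℝ) : (qmk a b c d).imK = d := rfl

set_option maxHeartbeats 1600000 in
lemma det_mulRight (q : Quaternion ℝ) :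
    LinearMap.det (LinearMap.mulRight ℝ q) = Quaternion.normSq q ^ 2 := by
  classical
  let B : Module.Basis (Fin 4) ℝ (Quaternion ℝ) := QuaternionAlgebra.basisOneIJK (-1 : ℝ) 0 (-1)
  rw [← LinearMap.det_toMatrix B]
  have hrepr : ∀ (x : Quaternion ℝ) (i : Fin 4),
      B.repr x i = ![x.re, x.imI, x.imJ, x.imK] i := fun x i =>
    congrFun (QuaternionAlgebra.coe_basisOneIJK_repr (c₁ := -1) (c₂ := 0) (c₃ := -1) x) i
  have hB : ∀ j : Fin 4, B j = qmk (![(1:ℝ),0,0,0] j) (![(0:ℝ),1,0,0] j) (![(0:ℝ),0,1,0] j)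
      (![(0:ℝ),0,0,1] j) := by
    intro j
    rw [Module.Basis.apply_eq_iff]
    ext i
    rw [hrepr]
    fin_cases i <;> fin_cases j <;> simp [Finsupp.single_apply]
  have hM : LinearMap.toMatrix B B (LinearMap.mulRight ℝ q) =
      !![q.re, -q.imI, -q.imJ, -q.imK;
         q.imI, q.re, q.imK, -q.imJ;
         q.imJ, -q.imK, q.re, q.imI;
         q.imK, q.imJ, -q.imI, q.re] := by
    ext i j
    rw [LinearMap.toMatrix_apply, LinearMap.mulRight_apply, hB j, hrepr]
    fin_cases i <;> fin_cases j <;>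
      simp [Quaternion.re_mul, Quaternion.imI_mul, Quaternion.imJ_mul, Quaternion.imK_mul]
  rw [hM]
  rw [show Quaternion.normSq q ^ 2
      = (q.re^2 + q.imI^2 + q.imJ^2 + q.imK^2)^2 by rw [Quaternion.normSq_def']]
  simp [Matrix.det_succ_row_zero, Fin.sum_univ_succ, Fin.succAbove]
  ring

lemma image_mulRight_volume (q : Quaternion ℝ) (s : Set (Quaternion ℝ)) :
    volume ((fun x => x * q) '' s) = ENNReal.ofReal (‖q‖ ^ 4) * volume s := by
  have h := MeasureTheory.Measure.addHaar_image_linearMap (μ := volume)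
    (LinearMap.mulRight ℝ q) s
  rw [show ⇑(LinearMap.mulRight ℝ q) = fun x => x * q from rfl] at h
  rw [h, det_mulRight]
  congr 1
  rw [abs_of_nonneg (by positivity), Quaternion.normSq_eq_norm_mul_self]
  ring

lemma norm_le_two_of_fundDom {d : Quaternion ℝ}
    (h0 : 0 ≤ d.re) (h1 : d.re ≤ 1) (h2 : 0 ≤ d.imI) (h3 : d.imI ≤ 1)
    (h4 : 0 ≤ d.imJ) (h5 : d.imJ ≤ 1) (h6 : 0 ≤ d.imK) (h7 : d.imK ≤ 1) : ‖d‖ ≤ 2 := by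
  have hsq : ‖d‖ * ‖d‖ ≤ 2 * 2 := by
    rw [← Quaternion.normSq_eq_norm_mul_self, Quaternion.normSq_def']
    nlinarith
  nlinarith [norm_nonneg d]

lemma abs_coords_le_norm (x : Quaternion ℝ) :
    |x.re| ≤ ‖x‖ ∧ |x.imI| ≤ ‖x‖ ∧ |x.imJ| ≤ ‖x‖ ∧ |x.imK| ≤ ‖x‖ := by
  have h : Quaternion.normSq x = ‖x‖ * ‖x‖ := Quaternion.normSq_eq_norm_mul_self x
  rw [Quaternion.normSq_def'] at h
  have hn := norm_nonneg x
  refine ⟨abs_le.2 ⟨by nlinarith, by nlinarith⟩, abs_le.2 ⟨by nlinarith, by nlinarith⟩,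
    abs_le.2 ⟨by nlinarith, by nlinarith⟩, abs_le.2 ⟨by nlinarith, by nlinarith⟩⟩

lemma hurwitz_exists (x : Quaternion ℝ) : ∃ h : Quaternion ℝ, IsHurwitz h ∧ x - h ∈ fundDom := by
  by_cases hc : Int.fract x.imK < 1/2
  · refine ⟨qmk (⌊x.re⌋ : ℝ) (⌊x.imI⌋ : ℝ) (⌊x.imJ⌋ : ℝ) (⌊x.imK⌋ : ℝ),
      Or.inl ⟨⌊x.re⌋, ⌊x.imI⌋, ⌊x.imJ⌋, ⌊x.imK⌋, rfl, rfl, rfl, rfl⟩, ?_⟩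
    refine ⟨?_, ?_, ?_, ?_, ?_, ?_, ?_, ?_⟩ <;>
      simp only [Quaternion.re_sub, Quaternion.imI_sub, Quaternion.imJ_sub, Quaternion.imK_sub,
        qmk_re, qmk_imI, qmk_imJ, qmk_imK]
    · exact sub_nonneg.2 (Int.floor_le _)
    · have := Int.lt_floor_add_one x.re; push_cast; linarith
    · exact sub_nonneg.2 (Int.floor_le _)
    · have := Int.lt_floor_add_one x.imI; push_cast; linarith
    · exact sub_nonneg.2 (Int.floor_le _)
    · have := Int.lt_floor_add_one x.imJ; push_cast; linarith
    · exact sub_nonneg.2 (Int.floor_le _)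
    · exact hc
  · push_neg at hc
    refine ⟨qmk ((⌊x.re - 1/2⌋ : ℝ) + 1/2) ((⌊x.imI - 1/2⌋ : ℝ) + 1/2) ((⌊x.imJ - 1/2⌋ : ℝ) + 1/2)
      ((⌊x.imK - 1/2⌋ : ℝ) + 1/2),
      Or.inr ⟨⌊x.re - 1/2⌋, ⌊x.imI - 1/2⌋, ⌊x.imJ - 1/2⌋, ⌊x.imK - 1/2⌋, rfl, rfl, rfl, rfl⟩, ?_⟩
    have key : ∀ t : ℝ, 0 ≤ t - ((⌊t - 1/2⌋ : ℝ) + 1/2) ∧ t - ((⌊t - 1/2⌋ : ℝ) + 1/2) < 1 := by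
      intro t
      constructor
      · have := Int.floor_le (t - 1/2); linarith
      · have := Int.lt_floor_add_one (t - 1/2); linarith
    have hK : x.imK - ((⌊x.imK - 1/2⌋ : ℝ) + 1/2) < 1/2 := by
      have h1 : ⌊x.imK - 1/2⌋ = ⌊x.imK⌋ := by
        rw [Int.floor_eq_iff]
        · rw [Int.fract] at hc
          have h2 := Int.fract_lt_one x.imK
          rw [Int.fract] at h2
          constructor
          · linarith
          · push_cast; linarith
      · rw [h1]
        have := Int.fract_lt_one x.imK
        rw [Int.fract] at this
        linarith
    exact ⟨(key x.re).1, (key x.re).2, (key x.imI).1, (key x.imI).2, (key x.imJ).1,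
      (key x.imJ).2, by exact (key x.imK).1, by exact hK⟩

lemma int_close {a b : ℤ} (h1 : (a:ℝ) - b < 1) (h2 : (b:ℝ) - a < 1) : a = b := by
  have h1' : a - b < 1 := by exact_mod_cast (by push_cast; linarith : ((a - b : ℤ) : ℝ) < 1)
  have h2' : b - a < 1 := by exact_mod_cast (by push_cast; linarith : ((b - a : ℤ) : ℝ) < 1)
  omega

lemma hurwitz_unique {x h₁ h₂ : Quaternion ℝ} (H1 : IsHurwitz h₁) (H2 : IsHurwitz h₂)
    (m1 : x - h₁ ∈ fundDom) (m2 : x - h₂ ∈ fundDom) : h₁ = h₂ := by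
  obtain ⟨p0, p1, p2, p3, p4, p5, p6, p7⟩ := m1
  obtain ⟨r0, r1, r2, r3, r4, r5, r6, r7⟩ := m2
  simp only [Quaternion.re_sub, Quaternion.imI_sub, Quaternion.imJ_sub, Quaternion.imK_sub]
    at p0 p1 p2 p3 p4 p5 p6 p7 r0 r1 r2 r3 r4 r5 r6 r7
  rcases H1 with ⟨a1, b1, c1, d1, e1, e2, e3, e4⟩ | ⟨a1, b1, c1, d1, e1, e2, e3, e4⟩ <;>
    rcases H2 with ⟨a2, b2, c2, d2, f1, f2, f3, f4⟩ | ⟨a2, b2, c2, d2, f1, f2, f3, f4⟩ <;>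
    simp only [e1, e2, e3, e4] at p0 p1 p2 p3 p4 p5 p6 p7 <;>
    simp only [f1, f2, f3, f4] at r0 r1 r2 r3 r4 r5 r6 r7
  · have ha : a1 = a2 := int_close (by linarith) (by linarith)
    have hb : b1 = b2 := int_close (by linarith) (by linarith)
    have hc : c1 = c2 := int_close (by linarith) (by linarith)
    have hd : d1 = d2 := int_close (by linarith) (by linarith)
    ext <;> simp [e1, e2, e3, e4, f1, f2, f3, f4, ha, hb, hc, hd]
  · exfalso
    have h1' : (d2:ℝ) < d1 := by linarith
    have h2' : (d1:ℝ) < d2 + 1 := by linarith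
    have h1'' : d2 < d1 := by exact_mod_cast h1'
    have h2'' : d1 < d2 + 1 := by exact_mod_cast (by push_cast; linarith : ((d1:ℝ)) < ((d2 + 1 : ℤ) : ℝ))
    omega
  · exfalso
    have h1' : (d1:ℝ) < d2 := by linarith
    have h2' : (d2:ℝ) < d1 + 1 := by linarith
    have h1'' : d1 < d2 := by exact_mod_cast h1'
    have h2'' : d2 < d1 + 1 := by exact_mod_cast (by push_cast; linarith : ((d2:ℝ)) < ((d1 + 1 : ℤ) : ℝ))
    omega
  · have ha : a1 = a2 := int_close (by linarith) (by linarith)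
    have hb : b1 = b2 := int_close (by linarith) (by linarith)
    have hc : c1 = c2 := int_close (by linarith) (by linarith)
    have hd : d1 = d2 := int_close (by linarith) (by linarith)
    ext <;> simp [e1, e2, e3, e4, f1, f2, f3, f4, ha, hb, hc, hd]

lemma hurwitz_half {p : Quaternion ℝ} (hp : IsHurwitz p) :
    ((⌊2*p.re⌋ : ℝ)/2 = p.re ∧ (⌊2*p.imI⌋ : ℝ)/2 = p.imI ∧
     (⌊2*p.imJ⌋ : ℝ)/2 = p.imJ ∧ (⌊2*p.imK⌋ : ℝ)/2 = p.imK) := by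
  have key : ∀ t : ℝ, (∃ a : ℤ, t = a) ∨ (∃ a : ℤ, t = a + 1/2) → (⌊2*t⌋ : ℝ)/2 = t := by
    rintro t (⟨a, rfl⟩ | ⟨a, rfl⟩)
    · rw [show (2:ℝ) * a = ((2*a : ℤ) : ℝ) by push_cast; ring, Int.floor_intCast]
      push_cast; ring
    · rw [show (2:ℝ) * (a + 1/2) = ((2*a+1 : ℤ) : ℝ) by push_cast; ring, Int.floor_intCast]
      push_cast; ring
  rcases hp with ⟨a, b, c, d, e1, e2, e3, e4⟩ | ⟨a, b, c, d, e1, e2, e3, e4⟩ <;>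
    exact ⟨key _ (by rw [e1]; first | exact Or.inl ⟨a, rfl⟩ | exact Or.inr ⟨a, rfl⟩),
      key _ (by rw [e2]; first | exact Or.inl ⟨b, rfl⟩ | exact Or.inr ⟨b, rfl⟩),
      key _ (by rw [e3]; first | exact Or.inl ⟨c, rfl⟩ | exact Or.inr ⟨c, rfl⟩),
      key _ (by rw [e4]; first | exact Or.inl ⟨d, rfl⟩ | exact Or.inr ⟨d, rfl⟩)⟩

lemma F_finite (q : Quaternion ℝ) (hq : q ≠ 0) :
    {p : Quaternion ℝ | IsHurwitz p ∧ p * q⁻¹ ∈ fundDomCl}.Finite := by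
  set F := {p : Quaternion ℝ | IsHurwitz p ∧ p * q⁻¹ ∈ fundDomCl} with hF
  set r := ‖q‖ with hrdef
  have hr0 : 0 < r := norm_pos_iff.2 hq
  set g : Quaternion ℝ → ℤ × ℤ × ℤ × ℤ :=
    fun p => (⌊2*p.re⌋, ⌊2*p.imI⌋, ⌊2*p.imJ⌋, ⌊2*p.imK⌋) with hg
  have hinj : Set.InjOn g F := by
    intro p hp p' hp' he
    obtain ⟨h1, h2, h3, h4⟩ := hurwitz_half hp.1
    obtain ⟨h1', h2', h3', h4'⟩ := hurwitz_half hp'.1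
    simp only [hg, Prod.mk.injEq] at he
    ext
    · rw [← h1, ← h1', he.1]
    · rw [← h2, ← h2', he.2.1]
    · rw [← h3, ← h3', he.2.2.1]
    · rw [← h4, ← h4', he.2.2.2]
  have hbound : ∀ p ∈ F, ‖p‖ ≤ 2 * r := by
    intro p hp
    obtain ⟨-, m⟩ := hp
    obtain ⟨m0, m1, m2, m3, m4, m5, m6, m7⟩ := m
    have hp' : p = (p * q⁻¹) * q := by
      rw [mul_assoc, inv_mul_cancel₀ hq, mul_one]
    calc ‖p‖ = ‖p * q⁻¹ * q‖ := by conv_lhs => rw [hp']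
    _ = ‖p * q⁻¹‖ * ‖q‖ := norm_mul _ _
    _ ≤ 2 * r := by
        apply mul_le_mul_of_nonneg_right _ (norm_nonneg q)
        exact norm_le_two_of_fundDom m0 m1 m2 m3 m4 m5 m6 (le_trans m7 (by norm_num))
  set K : ℤ := ⌈(4:ℝ)*r⌉ + 1 with hK
  have himg : g '' F ⊆ Set.Icc (-K, -K, -K, -K) (K, K, K, K) := by
    rintro - ⟨p, hp, rfl⟩
    have hn := hbound p hp
    obtain ⟨c1, c2, c3, c4⟩ := abs_coords_le_norm p
    have habs : ∀ t : ℝ, |t| ≤ ‖p‖ → -K ≤ ⌊2*t⌋ ∧ ⌊2*t⌋ ≤ K := by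
      intro t ht
      have h1 : |t| ≤ 2*r := le_trans ht hn
      rw [abs_le] at h1
      constructor
      · rw [Int.le_floor]
        push_cast [hK]
        have := Int.le_ceil ((4:ℝ)*r)
        linarith
      · have : ⌊2*t⌋ ≤ ⌊((K:ℝ))⌋ := Int.floor_le_floor (by
          push_cast [hK]
          have := Int.le_ceil ((4:ℝ)*r)
          linarith)
        simpa using this
    simp only [Set.mem_Icc, Prod.le_def]
    exact ⟨⟨(habs _ c1).1, (habs _ c2).1, (habs _ c3).1, (habs _ c4).1⟩,
      ⟨(habs _ c1).2, (habs _ c2).2, (habs _ c3).2, (habs _ c4).2⟩⟩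
  exact Set.Finite.of_finite_image ((Set.finite_Icc _ _).subset himg) hinj

lemma vol_box' (s0 s1 s2 s3 : Set ℝ) (h0 : MeasurableSet s0) (h1 : MeasurableSet s1)
    (h2 : MeasurableSet s2) (h3 : MeasurableSet s3) :
    volume {x : Quaternion ℝ | x.re ∈ s0 ∧ x.imI ∈ s1 ∧ x.imJ ∈ s2 ∧ x.imK ∈ s3}
      = volume s0 * volume s1 * volume s2 * volume s3 := by
  have hs : ∀ i, MeasurableSet (![s0,s1,s2,s3] i) := by
    intro i; fin_cases i <;> simpa
  have h := vol_box ![s0,s1,s2,s3] hs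
  simp only [Matrix.cons_val_zero, Matrix.cons_val_one, Matrix.head_cons,
    Matrix.cons_val_two, Matrix.tail_cons, Matrix.cons_val_three, Fin.prod_univ_four] at h
  rw [h]

lemma box_meas' (s0 s1 s2 s3 : Set ℝ) (h0 : MeasurableSet s0) (h1 : MeasurableSet s1)
    (h2 : MeasurableSet s2) (h3 : MeasurableSet s3) :
    MeasurableSet {x : Quaternion ℝ | x.re ∈ s0 ∧ x.imI ∈ s1 ∧ x.imJ ∈ s2 ∧ x.imK ∈ s3} := by
  have hs : ∀ i, MeasurableSet (![s0,s1,s2,s3] i) := by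
    intro i; fin_cases i <;> simpa
  have h := box_meas ![s0,s1,s2,s3] hs
  simpa using h

lemma fundDom_eq : fundDom = {x : Quaternion ℝ | x.re ∈ Set.Ico (0:ℝ) 1 ∧
    x.imI ∈ Set.Ico (0:ℝ) 1 ∧ x.imJ ∈ Set.Ico (0:ℝ) 1 ∧ x.imK ∈ Set.Ico (0:ℝ) (1/2)} := by
  ext x; simp [fundDom, Set.mem_Ico, and_assoc]

lemma fundDom_meas : MeasurableSet fundDom := by
  rw [fundDom_eq]
  exact box_meas' _ _ _ _ measurableSet_Ico measurableSet_Ico measurableSet_Ico measurableSet_Ico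

lemma fundDom_vol : volume fundDom = ENNReal.ofReal (1/2) := by
  rw [fundDom_eq, vol_box' _ _ _ _ measurableSet_Ico measurableSet_Ico measurableSet_Ico
    measurableSet_Ico]
  simp [Real.volume_Ico]

set_option maxHeartbeats 1000000 in
lemma count_bound (q : Quaternion ℝ) (hq : q ≠ 0) (hr16 : (16:ℝ) ≤ ‖q‖) :
    (‖q‖-4)^3*(‖q‖-8) ≤ (({p : Quaternion ℝ | IsHurwitz p ∧ p * q⁻¹ ∈ fundDomCl}.ncard : ℝ)) ∧
    (({p : Quaternion ℝ | IsHurwitz p ∧ p * q⁻¹ ∈ fundDomCl}.ncard : ℝ))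
      ≤ (‖q‖+4)^3*(‖q‖+8) := by
  set r := ‖q‖ with hrdef
  have hr0 : (0:ℝ) < r := lt_of_lt_of_le (by norm_num) hr16
  set F := {p : Quaternion ℝ | IsHurwitz p ∧ p * q⁻¹ ∈ fundDomCl} with hFdef
  have hFfin : F.Finite := F_finite q hq
  set s := hFfin.toFinset with hsdef
  set T : Quaternion ℝ → Set (Quaternion ℝ) := fun p => {x | x * q - p ∈ fundDom} with hTdef
  have hmq : Measurable fun x : Quaternion ℝ => x * q :=
    (continuous_id.mul continuous_const).measurable
  have hTm : ∀ p, MeasurableSet (T p) := by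
    intro p
    have : T p = (fun x : Quaternion ℝ => x * q) ⁻¹'
        ((fun y : Quaternion ℝ => y - p) ⁻¹' fundDom) := rfl
    rw [this]
    exact hmq ((continuous_id.sub continuous_const).measurable fundDom_meas)
  have hpre : ∀ (A : Set (Quaternion ℝ)),
      (fun x : Quaternion ℝ => x * q) ⁻¹' A = (fun y : Quaternion ℝ => y * q⁻¹) '' A := by
    intro A
    ext x
    constructor
    · intro hx
      exact ⟨x * q, hx, by show x * q * q⁻¹ = x; rw [mul_assoc, mul_inv_cancel₀ hq, mul_one]⟩
    · rintro ⟨a, ha, rfl⟩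
      simpa [Set.mem_preimage, mul_assoc, inv_mul_cancel₀ hq] using ha
  have hTv : ∀ p, volume (T p) = ENNReal.ofReal (1/2 * (1/r)^4) := by
    intro p
    have h1 : T p = (fun x : Quaternion ℝ => x * q) ⁻¹'
        ((fun y : Quaternion ℝ => y - p) ⁻¹' fundDom) := rfl
    rw [h1, hpre, image_mulRight_volume]
    have h2 : (fun y : Quaternion ℝ => y - p) = fun y : Quaternion ℝ => y + (-p) := by
      funext y; rw [sub_eq_add_neg]
    rw [h2, measure_preimage_add_right volume (-p) fundDom, fundDom_vol,
      ← ENNReal.ofReal_mul (by positivity), norm_inv]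
    congr 1
    rw [← hrdef]
    field_simp
  have hdisj : (↑s : Set (Quaternion ℝ)).PairwiseDisjoint T := by
    intro p1 h1 p2 h2 hne
    refine Set.disjoint_left.mpr fun x hx1 hx2 => hne ?_
    have hp1 : p1 ∈ F := hFfin.mem_toFinset.1 h1
    have hp2 : p2 ∈ F := hFfin.mem_toFinset.1 h2
    exact hurwitz_unique hp1.1 hp2.1 hx1 hx2
  have hsum : volume (⋃ p ∈ s, T p) = (s.card : ENNReal) * ENNReal.ofReal (1/2 * (1/r)^4) := by
    rw [measure_biUnion_finset hdisj (fun p _ => hTm p)]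
    simp [hTv, Finset.sum_const, nsmul_eq_mul]
  have hdq : ∀ d : Quaternion ℝ, d ∈ fundDom → ‖d * q⁻¹‖ ≤ 2/r := by
    intro d hd
    obtain ⟨m0, m1, m2, m3, m4, m5, m6, m7⟩ := hd
    have h2 : ‖d‖ ≤ 2 := norm_le_two_of_fundDom m0 m1.le m2 m3.le m4 m5.le m6
      (le_trans m7.le (by norm_num))
    rw [norm_mul, norm_inv, ← hrdef, div_eq_mul_inv]
    exact mul_le_mul_of_nonneg_right h2 (by positivity)
  -- upper bound
  have hsub : (⋃ p ∈ s, T p) ⊆ {x : Quaternion ℝ | x.re ∈ Set.Icc (-(2/r)) (1+2/r) ∧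
      x.imI ∈ Set.Icc (-(2/r)) (1+2/r) ∧ x.imJ ∈ Set.Icc (-(2/r)) (1+2/r) ∧
      x.imK ∈ Set.Icc (-(2/r)) (1/2+2/r)} := by
    intro x hx
    simp only [Set.mem_iUnion] at hx
    obtain ⟨p, hps, hxT⟩ := hx
    have hpF : p ∈ F := hFfin.mem_toFinset.1 hps
    obtain ⟨-, c0, c1, c2, c3, c4, c5, c6, c7⟩ := hpF
    have hdm : x * q - p ∈ fundDom := hxT
    have hx' : x = p * q⁻¹ + (x * q - p) * q⁻¹ := by
      rw [← add_mul]
      have : p + (x * q - p) = x * q := by abel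
      rw [this, mul_assoc, mul_inv_cancel₀ hq, mul_one]
    obtain ⟨a0, a1, a2, a3⟩ := abs_coords_le_norm ((x * q - p) * q⁻¹)
    have hn : ‖(x * q - p) * q⁻¹‖ ≤ 2/r := hdq _ hdm
    rw [abs_le] at a0 a1 a2 a3
    refine ⟨?_, ?_, ?_, ?_⟩ <;> rw [Set.mem_Icc] <;> constructor <;>
      rw [hx'] <;>
      simp only [Quaternion.re_add, Quaternion.imI_add, Quaternion.imJ_add,
        Quaternion.imK_add] <;>
      [skip; skip; skip; skip; skip; skip; skip; skip] <;> linarith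
  have hvplus : volume {x : Quaternion ℝ | x.re ∈ Set.Icc (-(2/r)) (1+2/r) ∧
      x.imI ∈ Set.Icc (-(2/r)) (1+2/r) ∧ x.imJ ∈ Set.Icc (-(2/r)) (1+2/r) ∧
      x.imK ∈ Set.Icc (-(2/r)) (1/2+2/r)}
      = ENNReal.ofReal ((1+4/r)*((1+4/r)*((1+4/r)*(1/2+4/r)))) := by
    rw [vol_box' _ _ _ _ measurableSet_Icc measurableSet_Icc measurableSet_Icc measurableSet_Icc]
    simp only [Real.volume_Icc]
    rw [show (1:ℝ)+2/r - -(2/r) = 1+4/r by ring, show (1:ℝ)/2+2/r - -(2/r) = 1/2+4/r by ring]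
    rw [← ENNReal.ofReal_mul (by positivity), ← ENNReal.ofReal_mul (by positivity),
      ← ENNReal.ofReal_mul (by positivity)]
    congr 1
    ring
  have hupper : (s.card : ℝ) * (1/2 * (1/r)^4) ≤ (1+4/r)*((1+4/r)*((1+4/r)*(1/2+4/r))) := by
    have h := le_trans (le_of_eq hsum.symm) (le_trans (measure_mono hsub) (le_of_eq hvplus))
    rw [show ((s.card : ENNReal)) = ENNReal.ofReal ((s.card : ℝ)) by
        rw [ENNReal.ofReal_natCast], ← ENNReal.ofReal_mul (by positivity)] at h
    exact (ENNReal.ofReal_le_ofReal_iff (by positivity)).1 h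
  -- lower bound
  have hsub2 : {x : Quaternion ℝ | x.re ∈ Set.Icc (2/r) (1-2/r) ∧
      x.imI ∈ Set.Icc (2/r) (1-2/r) ∧ x.imJ ∈ Set.Icc (2/r) (1-2/r) ∧
      x.imK ∈ Set.Icc (2/r) (1/2-2/r)} ⊆ ⋃ p ∈ s, T p := by
    intro x hx
    obtain ⟨hx0, hx1, hx2, hx3⟩ := hx
    rw [Set.mem_Icc] at hx0 hx1 hx2 hx3
    obtain ⟨h, hH, hhd⟩ := hurwitz_exists (x * q)
    have hxq : x * q * q⁻¹ = x := by rw [mul_assoc, mul_inv_cancel₀ hq, mul_one]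
    have hquot : h * q⁻¹ = x - (x * q - h) * q⁻¹ := by
      conv_lhs => rw [show h = x * q - (x * q - h) by abel]
      rw [sub_mul, hxq]
    obtain ⟨a0, a1, a2, a3⟩ := abs_coords_le_norm ((x * q - h) * q⁻¹)
    have hn : ‖(x * q - h) * q⁻¹‖ ≤ 2/r := hdq _ hhd
    rw [abs_le] at a0 a1 a2 a3
    have hmem : h ∈ F := by
      refine ⟨hH, ?_, ?_, ?_, ?_, ?_, ?_, ?_, ?_⟩ <;> rw [hquot] <;>
        simp only [Quaternion.re_sub, Quaternion.imI_sub, Quaternion.imJ_sub,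
          Quaternion.imK_sub] <;> linarith
    simp only [Set.mem_iUnion]
    exact ⟨h, hFfin.mem_toFinset.2 hmem, hhd⟩
  have hvminus : volume {x : Quaternion ℝ | x.re ∈ Set.Icc (2/r) (1-2/r) ∧
      x.imI ∈ Set.Icc (2/r) (1-2/r) ∧ x.imJ ∈ Set.Icc (2/r) (1-2/r) ∧
      x.imK ∈ Set.Icc (2/r) (1/2-2/r)}
      = ENNReal.ofReal ((1-4/r)*((1-4/r)*((1-4/r)*(1/2-4/r)))) := by
    have e1 : (0:ℝ) ≤ 1 - 4/r := by
      have : 4/r ≤ 4/16 := by apply div_le_div_of_nonneg_left <;> linarith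
      linarith
    have e2 : (0:ℝ) ≤ 1/2 - 4/r := by
      have : 4/r ≤ 4/16 := by apply div_le_div_of_nonneg_left <;> linarith
      linarith
    rw [vol_box' _ _ _ _ measurableSet_Icc measurableSet_Icc measurableSet_Icc measurableSet_Icc]
    simp only [Real.volume_Icc]
    rw [show (1:ℝ)-2/r - 2/r = 1-4/r by ring, show (1:ℝ)/2-2/r - 2/r = 1/2-4/r by ring]
    rw [← ENNReal.ofReal_mul e1, ← ENNReal.ofReal_mul (mul_nonneg e1 e1),
      ← ENNReal.ofReal_mul (mul_nonneg (mul_nonneg e1 e1) e1)]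
    congr 1
    ring
  have hlower : (1-4/r)*((1-4/r)*((1-4/r)*(1/2-4/r))) ≤ (s.card : ℝ) * (1/2 * (1/r)^4) := by
    have h := le_trans (le_of_eq hvminus.symm) (le_trans (measure_mono hsub2) (le_of_eq hsum))
    rw [show ((s.card : ENNReal)) = ENNReal.ofReal ((s.card : ℝ)) by
        rw [ENNReal.ofReal_natCast], ← ENNReal.ofReal_mul (by positivity)] at h
    exact (ENNReal.ofReal_le_ofReal_iff (by positivity)).1 h
  -- convert to N bounds
  have hcard : (F.ncard : ℝ) = (s.card : ℝ) := by
    rw [Set.ncard_eq_toFinset_card _ hFfin]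
  have hcoef : (1/2 * (1/r)^4) * (2*r^4) = 1 := by field_simp <;> ring
  constructor
  · rw [hcard]
    have key : (1-4/r)*((1-4/r)*((1-4/r)*(1/2-4/r))) * (2*r^4) = (r-4)^3*(r-8) := by
      field_simp <;> ring
    calc (r-4)^3*(r-8) = (1-4/r)*((1-4/r)*((1-4/r)*(1/2-4/r))) * (2*r^4) := key.symm
    _ ≤ ((s.card : ℝ) * (1/2 * (1/r)^4)) * (2*r^4) :=
        mul_le_mul_of_nonneg_right hlower (by positivity)
    _ = (s.card : ℝ) := by rw [mul_assoc, hcoef, mul_one]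
  · rw [hcard]
    have key : (1+4/r)*((1+4/r)*((1+4/r)*(1/2+4/r))) * (2*r^4) = (r+4)^3*(r+8) := by
      field_simp <;> ring
    calc (s.card : ℝ) = ((s.card : ℝ) * (1/2 * (1/r)^4)) * (2*r^4) := by
          rw [mul_assoc, hcoef, mul_one]
    _ ≤ (1+4/r)*((1+4/r)*((1+4/r)*(1/2+4/r))) * (2*r^4) :=
        mul_le_mul_of_nonneg_right hupper (by positivity)
    _ = (r+4)^3*(r+8) := key

/-- The number of Hurwitz integers `p` with `p * q⁻¹ ∈ Δ̄` is asymptotic to `‖q‖⁴`,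
and in particular is bounded above and below by constant multiples of `‖q‖⁴`
for `‖q‖` large. -/
theorem card_hurwitz_rationals_in_fundDomCl :
    (∀ ε : ℝ, 0 < ε → ∃ M : ℝ, ∀ q : Quaternion ℝ, IsHurwitz q → q ≠ 0 → M ≤ ‖q‖ →
      |(({p : Quaternion ℝ | IsHurwitz p ∧ p * q⁻¹ ∈ fundDomCl}.ncard : ℝ) / ‖q‖ ^ 4) - 1|
        < ε) ∧
    ∃ c C : ℝ, 0 < c ∧ 0 < C ∧ ∃ M : ℝ, ∀ q : Quaternion ℝ, IsHurwitz q → q ≠ 0 → M ≤ ‖q‖ →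
      c * ‖q‖ ^ 4 ≤ ({p : Quaternion ℝ | IsHurwitz p ∧ p * q⁻¹ ∈ fundDomCl}.ncard : ℝ) ∧
      ({p : Quaternion ℝ | IsHurwitz p ∧ p * q⁻¹ ∈ fundDomCl}.ncard : ℝ) ≤ C * ‖q‖ ^ 4 := by
  have main : ∀ ε : ℝ, 0 < ε → ∃ M : ℝ, ∀ q : Quaternion ℝ, IsHurwitz q → q ≠ 0 → M ≤ ‖q‖ →
      |(({p : Quaternion ℝ | IsHurwitz p ∧ p * q⁻¹ ∈ fundDomCl}.ncard : ℝ) / ‖q‖ ^ 4) - 1|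
        < ε := by
    intro ε hε
    refine ⟨16 + 48/ε, fun q hqH hq hM => ?_⟩
    have hεd : (0:ℝ) < 48/ε := by positivity
    have hr16 : (16:ℝ) ≤ ‖q‖ := by linarith
    have hr0 : (0:ℝ) < ‖q‖ := by linarith
    obtain ⟨hlo, hhi⟩ := count_bound q hq hr16
    set r := ‖q‖ with hrdef
    set N := ({p : Quaternion ℝ | IsHurwitz p ∧ p * q⁻¹ ∈ fundDomCl}.ncard : ℝ) with hNdef
    have h1 : N/r^4 - 1 ≤ 48/r := by
      have hpoly : (r+4)^3*(r+8) ≤ r^4 + 48*r^3 := by nlinarith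
      have hN : N ≤ r^4 + 48*r^3 := le_trans hhi hpoly
      rw [div_sub_one (by positivity), div_le_div_iff₀ (by positivity) hr0]
      nlinarith
    have h2 : 1 - N/r^4 ≤ 48/r := by
      have hpoly : r^4 - 48*r^3 ≤ (r-4)^3*(r-8) := by nlinarith
      have hN : r^4 - 48*r^3 ≤ N := le_trans hpoly hlo
      have hq2 : (1 - 48/r) ≤ N/r^4 := by
        rw [le_div_iff₀ (by positivity : (0:ℝ) < r^4)]
        calc (1 - 48/r) * r^4 = r^4 - 48*r^3 := by field_simp <;> ring
        _ ≤ N := hN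
      linarith
    have h3 : 48/r < ε := by
      have hgt : 48/ε < r := by linarith
      rw [div_lt_iff₀ hr0]
      calc (48:ℝ) = (48/ε) * ε := by field_simp
      _ < r * ε := mul_lt_mul_of_pos_right hgt hε
      _ = ε * r := mul_comm _ _
    exact abs_lt.2 ⟨by linarith, by linarith⟩
  refine ⟨main, ?_⟩
  obtain ⟨M, hM⟩ := main (1/2) (by norm_num)
  refine ⟨1/2, 2, by norm_num, by norm_num, max M 1, fun q hH hq hMq => ?_⟩
  have h := hM q hH hq (le_trans (le_max_left _ _) hMq)
  have hr1 : (1:ℝ) ≤ ‖q‖ := le_trans (le_max_right _ _) hMq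
  have hr4 : (0:ℝ) < ‖q‖^4 := by positivity
  rw [abs_lt] at h
  set N := ({p : Quaternion ℝ | IsHurwitz p ∧ p * q⁻¹ ∈ fundDomCl}.ncard : ℝ) with hNdef
  have hdiv : N/‖q‖^4 * ‖q‖^4 = N := div_mul_cancel₀ _ (ne_of_gt hr4)
  constructor
  · nlinarith [h.1]
  · nlinarith [h.2]
end

section
/- Let Ψ : ℕ → (0,∞) be such that ∑_{m=1}^∞ Ψ(m)⁴·m⁷ < ∞. Then the set 𝒲(Ψ) of quaternions ξ such that |ξ − p·q⁻¹|₂ < Ψ(⌊|q|₂⌋) for infinitely many pairs of Hurwitz integers (p,q), q ≠ 0, has 4-dimensional Lebesgue measure zero. -/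
open MeasureTheory Metric Filter Set Quaternion

/-- The set of `Ψ`-approximable quaternions. -/
def WSet (Ψ : ℕ → ℝ) : Set (Quaternion ℝ) :=
  {ξ | {pq : Quaternion ℝ × Quaternion ℝ | IsHurwitz pq.1 ∧ IsHurwitz pq.2 ∧ pq.2 ≠ 0 ∧
    ‖ξ - pq.1 * pq.2⁻¹‖ < Ψ ⌊‖pq.2‖⌋₊}.Infinite}

/-! ### Auxiliary machinery -/

open scoped ENNReal NNReal

noncomputable abbrev qkΦ := Quaternion.linearIsometryEquivTuple

lemma qk_meas_equivTuple_symm :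
    Measurable ((Quaternion.equivTuple ℝ).symm : (Fin 4 → ℝ) → Quaternion ℝ) := by
  have h : ((Quaternion.equivTuple ℝ).symm : (Fin 4 → ℝ) → Quaternion ℝ) =
      (qkΦ.symm : EuclideanSpace ℝ (Fin 4) → Quaternion ℝ) ∘
        ⇑(MeasurableEquiv.toLp 2 (Fin 4 → ℝ)) := rfl
  rw [h]
  exact qkΦ.symm.continuous.measurable.comp (MeasurableEquiv.measurable _)

lemma qk_mp_phi :
    MeasurePreserving (qkΦ : Quaternion ℝ → EuclideanSpace ℝ (Fin 4)) volume volume := by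
  refine ⟨qkΦ.continuous.measurable, ?_⟩
  have hv : (volume : Measure (Quaternion ℝ)) =
      Measure.map (Quaternion.equivTuple ℝ).symm volume := rfl
  rw [hv, Measure.map_map qkΦ.continuous.measurable qk_meas_equivTuple_symm]
  have h : (⇑qkΦ ∘ ((Quaternion.equivTuple ℝ).symm : (Fin 4 → ℝ) → Quaternion ℝ))
      = ⇑(MeasurableEquiv.toLp 2 (Fin 4 → ℝ)) := by
    funext x
    show WithLp.toLp 2 ![x 0, x 1, x 2, x 3] = _
    rw [MeasurableEquiv.coe_toLp]
    congr 1
    funext i; fin_cases i <;> rfl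
  rw [h]
  exact (EuclideanSpace.volume_preserving_symm_measurableEquiv_toLp (Fin 4)).symm.map_eq

lemma qk_vol_image (s : Set (Quaternion ℝ)) (hs : MeasurableSet s) :
    volume s = volume (⇑qkΦ '' s) := by
  have hms : MeasurableSet (⇑qkΦ '' s) :=
    (qkΦ.toHomeomorph.toMeasurableEquiv.measurableSet_image).2 hs
  have h := qk_mp_phi.measure_preimage hms.nullMeasurableSet
  rw [← h]
  congr 1
  exact (qkΦ.toEquiv.preimage_image s).symm

noncomputable def qkV : ℝ≥0∞ := volume (ball (0 : EuclideanSpace ℝ (Fin 4)) 1)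

lemma qk_vol_ball (x : Quaternion ℝ) {r : ℝ} (hr : 0 ≤ r) :
    volume (ball x r) = ENNReal.ofReal (r^4) * qkV := by
  rw [qk_vol_image _ measurableSet_ball,
    show ⇑qkΦ '' ball x r = ball (qkΦ x) r from qkΦ.toIsometryEquiv.image_ball x r,
    Measure.addHaar_ball volume _ hr, finrank_euclideanSpace_fin]
  rfl

lemma qk_vol_closedBall (x : Quaternion ℝ) {r : ℝ} (hr : 0 ≤ r) :
    volume (closedBall x r) = ENNReal.ofReal (r^4) * qkV := by
  rw [qk_vol_image _ measurableSet_closedBall,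
    show ⇑qkΦ '' closedBall x r = closedBall (qkΦ x) r from
      qkΦ.toIsometryEquiv.image_closedBall x r,
    Measure.addHaar_closedBall_eq_addHaar_ball, Measure.addHaar_ball volume _ hr,
    finrank_euclideanSpace_fin]
  rfl

lemma qkV_pos : 0 < qkV := measure_ball_pos _ _ one_pos
lemma qkV_ne_top : qkV ≠ ⊤ := measure_ball_lt_top.ne

lemma IsHurwitz.sub {x y : Quaternion ℝ} (hx : IsHurwitz x) (hy : IsHurwitz y) :
    IsHurwitz (x - y) := by
  have hre : (x - y).re = x.re - y.re := by simp
  have hI : (x - y).imI = x.imI - y.imI := by simp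
  have hJ : (x - y).imJ = x.imJ - y.imJ := by simp
  have hK : (x - y).imK = x.imK - y.imK := by simp
  rcases hx with ⟨a,b,c,d,h1,h2,h3,h4⟩ | ⟨a,b,c,d,h1,h2,h3,h4⟩ <;>
    rcases hy with ⟨a',b',c',d',g1,g2,g3,g4⟩ | ⟨a',b',c',d',g1,g2,g3,g4⟩
  · exact Or.inl ⟨a-a', b-b', c-c', d-d', by
      push_cast [hre,hI,hJ,hK,h1,h2,h3,h4,g1,g2,g3,g4]
      refine ⟨by ring, by ring, by ring, by ring⟩⟩
  · exact Or.inr ⟨a-a'-1, b-b'-1, c-c'-1, d-d'-1, by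
      push_cast [hre,hI,hJ,hK,h1,h2,h3,h4,g1,g2,g3,g4]
      refine ⟨by ring, by ring, by ring, by ring⟩⟩
  · exact Or.inr ⟨a-a', b-b', c-c', d-d', by
      push_cast [hre,hI,hJ,hK,h1,h2,h3,h4,g1,g2,g3,g4]
      refine ⟨by ring, by ring, by ring, by ring⟩⟩
  · exact Or.inl ⟨a-a', b-b', c-c', d-d', by
      push_cast [hre,hI,hJ,hK,h1,h2,h3,h4,g1,g2,g3,g4]
      refine ⟨by ring, by ring, by ring, by ring⟩⟩

lemma qk_int_sq_ge {n : ℤ} (hn : n ≠ 0) : (1:ℝ) ≤ (n:ℝ)^2 := by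
  have h1 : (1:ℤ) ≤ |n| := Int.one_le_abs hn
  have h2 : (1:ℝ) ≤ |(n:ℝ)| := by
    rw [← Int.cast_abs]
    exact_mod_cast h1
  nlinarith [abs_nonneg (n:ℝ), sq_abs (n:ℝ)]

lemma qk_half_sq_ge (a : ℤ) : (1/4:ℝ) ≤ ((a:ℝ) + 1/2)^2 := by
  rcases le_or_gt 0 a with h | h
  · have h' : (0:ℝ) ≤ a := by exact_mod_cast h
    nlinarith
  · have h' : a ≤ -1 := by omega
    have h'' : (a:ℝ) ≤ -1 := by exact_mod_cast h'
    nlinarith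

lemma IsHurwitz.one_le_norm {x : Quaternion ℝ} (hx : IsHurwitz x) (h0 : x ≠ 0) :
    1 ≤ ‖x‖ := by
  have hsq : ‖x‖^2 = x.re^2 + x.imI^2 + x.imJ^2 + x.imK^2 := by
    rw [sq, ← Quaternion.normSq_eq_norm_mul_self, Quaternion.normSq_def']
  have key : 1 ≤ ‖x‖^2 := by
    rcases hx with ⟨a,b,c,d,h1,h2,h3,h4⟩ | ⟨a,b,c,d,h1,h2,h3,h4⟩
    · have hne : ¬(a = 0 ∧ b = 0 ∧ c = 0 ∧ d = 0) := by
        rintro ⟨rfl,rfl,rfl,rfl⟩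
        exact h0 (by ext <;> simp [h1,h2,h3,h4])
      rw [hsq, h1, h2, h3, h4]
      rcases not_and_or.1 hne with h | h
      · nlinarith [qk_int_sq_ge h, sq_nonneg (b:ℝ), sq_nonneg (c:ℝ), sq_nonneg (d:ℝ)]
      rcases not_and_or.1 h with h | h
      · nlinarith [qk_int_sq_ge h, sq_nonneg (a:ℝ), sq_nonneg (c:ℝ), sq_nonneg (d:ℝ)]
      rcases not_and_or.1 h with h | h
      · nlinarith [qk_int_sq_ge h, sq_nonneg (a:ℝ), sq_nonneg (b:ℝ), sq_nonneg (d:ℝ)]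
      · nlinarith [qk_int_sq_ge h, sq_nonneg (a:ℝ), sq_nonneg (b:ℝ), sq_nonneg (c:ℝ)]
    · rw [hsq, h1, h2, h3, h4]
      nlinarith [qk_half_sq_ge a, qk_half_sq_ge b, qk_half_sq_ge c, qk_half_sq_ge d]
  nlinarith [norm_nonneg x]

lemma qk_hurwitz_dist {x y : Quaternion ℝ} (hx : IsHurwitz x) (hy : IsHurwitz y)
    (hne : x ≠ y) : 1 ≤ dist x y := by
  rw [dist_eq_norm]
  exact (hx.sub hy).one_le_norm (sub_ne_zero.2 hne)

lemma qk_card_bound {a b : ℝ} (hab : a ≤ b + 1) (hb : 0 ≤ b) (F : Finset (Quaternion ℝ))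
    (hH : ∀ v ∈ F, IsHurwitz v) (h1 : ∀ v ∈ F, a ≤ ‖v‖) (h2 : ∀ v ∈ F, ‖v‖ ≤ b) :
    (F.card : ℝ) ≤ 16 * ((b + 1/2)^4 - (max (a - 1/2) 0)^4) := by
  set a' : ℝ := max (a - 1/2) 0 with ha'def
  have ha'0 : 0 ≤ a' := le_max_right _ _
  have ha'b : a' ≤ b + 1/2 := max_le (by linarith) (by linarith)
  have hD : 0 ≤ (b + 1/2)^4 - a'^4 := by
    have := pow_le_pow_left₀ ha'0 ha'b 4
    linarith
  have hdisj : (F : Set (Quaternion ℝ)).PairwiseDisjoint (fun v => ball v (1/2 : ℝ)) := by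
    intro x hx y hy hxy
    exact ball_disjoint_ball (by
      have := qk_hurwitz_dist (hH x hx) (hH y hy) hxy
      linarith)
  have hvol : volume (⋃ v ∈ F, ball v (1/2 : ℝ)) =
      (F.card : ℝ≥0∞) * (ENNReal.ofReal ((1/2 : ℝ)^4) * qkV) := by
    rw [measure_biUnion_finset hdisj (fun v _ => measurableSet_ball)]
    rw [Finset.sum_congr rfl (fun v _ => qk_vol_ball v (by norm_num))]
    rw [Finset.sum_const, nsmul_eq_mul]
  have hsub : (⋃ v ∈ F, ball v (1/2 : ℝ)) ⊆
      closedBall (0 : Quaternion ℝ) (b + 1/2) \ ball 0 a' := by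
    intro x hx
    simp only [mem_iUnion, exists_prop] at hx
    obtain ⟨v, hv, hxv⟩ := hx
    have hnv1 := h1 v hv
    have hnv2 := h2 v hv
    rw [mem_ball, dist_eq_norm] at hxv
    constructor
    · rw [mem_closedBall, dist_zero_right]
      calc ‖x‖ = ‖(x - v) + v‖ := by rw [sub_add_cancel]
        _ ≤ ‖x - v‖ + ‖v‖ := norm_add_le _ _
        _ ≤ b + 1/2 := by linarith
    · rw [mem_ball, dist_zero_right]
      push_neg
      refine max_le ?_ (norm_nonneg x)
      have h' : ‖v‖ - ‖x‖ ≤ ‖x - v‖ := by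
        rw [norm_sub_rev]
        exact norm_sub_norm_le v x
      linarith
  have hfin : volume (ball (0 : Quaternion ℝ) a') ≠ ⊤ := by
    rw [qk_vol_ball _ ha'0]
    exact ENNReal.mul_ne_top ENNReal.ofReal_ne_top qkV_ne_top
  have hE : (F.card : ℝ≥0∞) * (ENNReal.ofReal ((1/2 : ℝ)^4) * qkV) ≤
      ENNReal.ofReal ((b + 1/2)^4 - a'^4) * qkV := by
    calc (F.card : ℝ≥0∞) * (ENNReal.ofReal ((1/2 : ℝ)^4) * qkV)
        = volume (⋃ v ∈ F, ball v (1/2 : ℝ)) := hvol.symm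
      _ ≤ volume (closedBall (0 : Quaternion ℝ) (b + 1/2) \ ball 0 a') := measure_mono hsub
      _ = volume (closedBall (0 : Quaternion ℝ) (b + 1/2)) -
            volume (ball (0 : Quaternion ℝ) a') :=
          measure_diff (ball_subset_closedBall.trans (closedBall_subset_closedBall ha'b))
            measurableSet_ball.nullMeasurableSet hfin
      _ = ENNReal.ofReal ((b + 1/2)^4 - a'^4) * qkV := by
          rw [qk_vol_closedBall _ (by linarith : (0:ℝ) ≤ b + 1/2), qk_vol_ball _ ha'0,
            ← ENNReal.sub_mul (fun _ _ => qkV_ne_top), ← ENNReal.ofReal_sub _ (by positivity)]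
  rw [← mul_assoc] at hE
  rw [ENNReal.mul_le_mul_iff_left qkV_pos.ne' qkV_ne_top] at hE
  rw [← ENNReal.ofReal_natCast F.card, ← ENNReal.ofReal_mul (by positivity)] at hE
  have hfin2 := (ENNReal.ofReal_le_ofReal_iff hD).1 hE
  norm_num at hfin2
  linarith

lemma qk_hurwitz_finite (R : ℝ) : {x : Quaternion ℝ | IsHurwitz x ∧ ‖x‖ ≤ R}.Finite := by
  by_contra h
  rw [← Set.not_infinite, not_not] at h
  obtain ⟨F, hFsub, hcard⟩ :=
    h.exists_subset_card_eq (⌈16 * ((max R 0 + 1/2)^4)⌉₊ + 1)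
  have hb : ∀ v ∈ F, ‖v‖ ≤ max R 0 := fun v hv => le_trans (hFsub hv).2 (le_max_left _ _)
  have hcb := qk_card_bound (a := 0) (b := max R 0)
      (by positivity) (le_max_right R 0) F
      (fun v hv => (hFsub hv).1) (fun v _ => norm_nonneg v) hb
  rw [hcard, max_eq_right (by norm_num : (0:ℝ) - 1/2 ≤ 0)] at hcb
  have hle : (16 * ((max R 0 + 1/2)^4) : ℝ) ≤ ⌈16 * ((max R 0 + 1/2)^4)⌉₊ := Nat.le_ceil _
  push_cast at hcb
  norm_num at hcb
  linarith

/-- Hurwitz points in the annulus `m ≤ ‖q‖ ≤ m+1`. -/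
def qkQset (m : ℕ) : Set (Quaternion ℝ) := {q | IsHurwitz q ∧ (m:ℝ) ≤ ‖q‖ ∧ ‖q‖ ≤ (m:ℝ)+1}

lemma qkQfin (m : ℕ) : (qkQset m).Finite :=
  (qk_hurwitz_finite ((m:ℝ)+1)).subset fun q hq => ⟨hq.1, hq.2.2⟩

/-- Hurwitz points in the ball `‖p‖ ≤ C(m+1)`. -/
def qkPset (C : ℝ) (m : ℕ) : Set (Quaternion ℝ) := {p | IsHurwitz p ∧ ‖p‖ ≤ C*((m:ℝ)+1)}

lemma qkPfin (C : ℝ) (m : ℕ) : (qkPset C m).Finite := qk_hurwitz_finite _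

noncomputable def qkU (C r : ℝ) (m : ℕ) : Set (Quaternion ℝ) :=
  ⋃ pq ∈ (qkPfin C m).toFinset ×ˢ (qkQfin m).toFinset, ball (pq.1 * pq.2⁻¹) r

lemma qkQcard (m : ℕ) (hm : 1 ≤ m) : ((qkQfin m).toFinset.card : ℝ) ≤ 2000 * (m:ℝ)^3 := by
  have hm1 : (1:ℝ) ≤ (m:ℝ) := by exact_mod_cast hm
  have h := qk_card_bound (a := (m:ℝ)) (b := (m:ℝ)+1) (by linarith) (by linarith)
    (qkQfin m).toFinset (fun v hv => ((qkQfin m).mem_toFinset.1 hv).1)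
    (fun v hv => ((qkQfin m).mem_toFinset.1 hv).2.1)
    (fun v hv => ((qkQfin m).mem_toFinset.1 hv).2.2)
  rw [max_eq_left (by linarith)] at h
  nlinarith [mul_le_mul_of_nonneg_left hm1 (by positivity : (0:ℝ) ≤ (m:ℝ)^2),
    mul_le_mul_of_nonneg_left hm1 (by positivity : (0:ℝ) ≤ (m:ℝ))]

lemma qkPcard (C : ℝ) (hC : 0 ≤ C) (m : ℕ) (hm : 1 ≤ m) :
    (((qkPfin C m).toFinset.card : ℝ)) ≤ 256*(C+1)^4 * (m:ℝ)^4 := by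
  have hm1 : (1:ℝ) ≤ (m:ℝ) := by exact_mod_cast hm
  have h := qk_card_bound (a := 0) (b := C*((m:ℝ)+1)) (by positivity) (by positivity)
    (qkPfin C m).toFinset (fun v hv => (((qkPfin C m).mem_toFinset).1 hv).1)
    (fun v _ => norm_nonneg v) (fun v hv => (((qkPfin C m).mem_toFinset).1 hv).2)
  rw [max_eq_right (by norm_num : (0:ℝ)-1/2 ≤ 0)] at h
  have h1 : C*((m:ℝ)+1)+1/2 ≤ (C+1)*(2*(m:ℝ)) := by
    nlinarith [mul_nonneg hC (sub_nonneg.2 hm1)]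
  have h2 : (C*((m:ℝ)+1)+1/2)^4 ≤ ((C+1)*(2*(m:ℝ)))^4 := pow_le_pow_left₀ (by positivity) h1 4
  nlinarith [h2]

lemma qkUvol (C : ℝ) (hC : 0 ≤ C) {r : ℝ} (hr : 0 ≤ r) (m : ℕ) (hm : 1 ≤ m) :
    volume (qkU C r m) ≤ ENNReal.ofReal ((512000*(C+1)^4) * ((m:ℝ)^7 * r^4)) * qkV := by
  have hmain : (((qkPfin C m).toFinset ×ˢ (qkQfin m).toFinset).card : ℝ≥0∞) *
      ENNReal.ofReal (r^4) ≤ ENNReal.ofReal ((512000*(C+1)^4) * ((m:ℝ)^7 * r^4)) := by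
    rw [← ENNReal.ofReal_natCast, ← ENNReal.ofReal_mul (by positivity)]
    apply ENNReal.ofReal_le_ofReal
    rw [Finset.card_product]
    have hcc : (((qkPfin C m).toFinset.card : ℝ)) * ((qkQfin m).toFinset.card : ℝ) ≤
        (256*(C+1)^4 * (m:ℝ)^4) * (2000 * (m:ℝ)^3) :=
      mul_le_mul (qkPcard C hC m hm) (qkQcard m hm) (Nat.cast_nonneg _) (by positivity)
    have hc2 := mul_le_mul_of_nonneg_right hcc (pow_nonneg hr 4)
    push_cast
    nlinarith [hc2]
  calc volume (qkU C r m) ≤ ∑ pq ∈ (qkPfin C m).toFinset ×ˢ (qkQfin m).toFinset,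
        volume (ball (pq.1 * pq.2⁻¹) r) := measure_biUnion_finset_le _ _
    _ = (((qkPfin C m).toFinset ×ˢ (qkQfin m).toFinset).card : ℝ≥0∞) *
        (ENNReal.ofReal (r^4) * qkV) := by
        rw [Finset.sum_congr rfl (fun pq _ => qk_vol_ball _ hr), Finset.sum_const, nsmul_eq_mul]
    _ ≤ ENNReal.ofReal ((512000*(C+1)^4) * ((m:ℝ)^7 * r^4)) * qkV := by
        rw [← mul_assoc]
        exact mul_le_mul_left hmain qkV

lemma qk_key (Ψ : ℕ → ℝ) (hΨ : ∀ m, 0 < Ψ m)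
    (hsum : Summable fun m : ℕ => Ψ m ^ 4 * (m : ℝ) ^ 7) (N : ℕ) :
    volume (WSet Ψ ∩ closedBall 0 (N:ℝ)) = 0 := by
  have hS0 : 0 ≤ ∑' m, Ψ m ^ 4 * (m:ℝ)^7 := tsum_nonneg fun m => by positivity
  set C₁ : ℝ := max 1 (∑' m, Ψ m ^ 4 * (m:ℝ)^7) with hC₁def
  have hC₁1 : (1:ℝ) ≤ C₁ := le_max_left _ _
  have hΨle : ∀ m : ℕ, 1 ≤ m → Ψ m ≤ C₁ := by
    intro m hm
    have hm1 : (1:ℝ) ≤ (m:ℝ) := by exact_mod_cast hm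
    have h1 : Ψ m ^ 4 * (m:ℝ)^7 ≤ ∑' m, Ψ m ^ 4 * (m:ℝ)^7 :=
      hsum.le_tsum m (fun j _ => by positivity)
    have h7 : (1:ℝ) ≤ (m:ℝ)^7 := by
      calc (1:ℝ) = 1^7 := by norm_num
        _ ≤ (m:ℝ)^7 := pow_le_pow_left₀ zero_le_one hm1 7
    have h2 : Ψ m ^ 4 ≤ ∑' m, Ψ m ^ 4 * (m:ℝ)^7 := by
      nlinarith [mul_nonneg (pow_nonneg (hΨ m).le 4) (sub_nonneg.2 h7)]
    by_contra hc
    push_neg at hc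
    have hg1 : 1 < Ψ m := lt_of_le_of_lt hC₁1 hc
    have h3 : Ψ m ≤ Ψ m ^ 4 := le_self_pow₀ hg1.le (by norm_num)
    have h5 : (∑' m, Ψ m ^ 4 * (m:ℝ)^7) ≤ C₁ := le_max_right _ _
    linarith
  set C₂ : ℝ := (N:ℝ) + C₁ with hC₂def
  have hC₂0 : (0:ℝ) ≤ C₂ := by
    have : (0:ℝ) ≤ (N:ℝ) := Nat.cast_nonneg N
    linarith
  set f : ℕ → ℝ≥0∞ :=
    fun m => ENNReal.ofReal ((512000*(C₂+1)^4) * ((m:ℝ)^7 * Ψ m^4)) * qkV with hfdef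
  have hfsum : (∑' m, f m) ≠ ⊤ := by
    have hg : Summable (fun m : ℕ => (512000*(C₂+1)^4) * ((m:ℝ)^7 * Ψ m^4)) :=
      (hsum.mul_left (512000*(C₂+1)^4)).congr (fun m => by ring)
    rw [hfdef, ENNReal.tsum_mul_right]
    refine ENNReal.mul_ne_top ?_ qkV_ne_top
    rw [← ENNReal.ofReal_tsum_of_nonneg (fun m => by positivity) hg]
    exact ENNReal.ofReal_ne_top
  have hcover : ∀ M : ℕ, 1 ≤ M →
      (WSet Ψ ∩ closedBall 0 (N:ℝ)) ⊆ ⋃ k : ℕ, qkU C₂ (Ψ (M+k)) (M+k) := by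
    intro M hM ξ hmem
    obtain ⟨hξW, hξN⟩ := hmem
    rw [mem_closedBall, dist_zero_right] at hξN
    have hT : {pq : Quaternion ℝ × Quaternion ℝ | IsHurwitz pq.1 ∧ IsHurwitz pq.2 ∧ pq.2 ≠ 0 ∧
        ‖ξ - pq.1 * pq.2⁻¹‖ < Ψ ⌊‖pq.2‖⌋₊}.Infinite := hξW
    have hMr : (1:ℝ) ≤ (M:ℝ) := by exact_mod_cast hM
    have hfinB : {pq : Quaternion ℝ × Quaternion ℝ |
        (IsHurwitz pq.1 ∧ IsHurwitz pq.2 ∧ pq.2 ≠ 0 ∧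
          ‖ξ - pq.1 * pq.2⁻¹‖ < Ψ ⌊‖pq.2‖⌋₊) ∧ ‖pq.2‖ < (M:ℝ)}.Finite := by
      apply Set.Finite.subset (((qk_hurwitz_finite (C₂*M)).prod (qk_hurwitz_finite (M:ℝ))))
      intro pq h
      obtain ⟨⟨hp, hq, hq0, happ⟩, hqM⟩ := h
      have hq1 : 1 ≤ ‖pq.2‖ := hq.one_le_norm hq0
      have hm' : 1 ≤ ⌊‖pq.2‖⌋₊ := Nat.le_floor (by exact_mod_cast hq1)
      have hΨm : Ψ ⌊‖pq.2‖⌋₊ ≤ C₁ := hΨle _ hm'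
      have hpqn : ‖pq.1 * pq.2⁻¹‖ ≤ C₂ := by
        have h' : ‖pq.1*pq.2⁻¹‖ - ‖ξ‖ ≤ ‖ξ - pq.1*pq.2⁻¹‖ := by
          rw [norm_sub_rev]
          exact norm_sub_norm_le _ _
        rw [hC₂def]
        linarith
      refine Set.mem_prod.2 ⟨⟨hp, ?_⟩, hq, hqM.le⟩
      calc ‖pq.1‖ = ‖pq.1*pq.2⁻¹‖*‖pq.2‖ := by rw [← norm_mul, inv_mul_cancel_right₀ hq0]
        _ ≤ C₂ * M := mul_le_mul hpqn hqM.le (norm_nonneg _) hC₂0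
    have hdiff := hT.diff hfinB
    obtain ⟨pq, hpqT, hpqB⟩ := hdiff.nonempty
    obtain ⟨hp, hq, hq0, happ⟩ := hpqT
    have hqM : (M:ℝ) ≤ ‖pq.2‖ := by
      by_contra hc
      push_neg at hc
      exact hpqB ⟨⟨hp, hq, hq0, happ⟩, hc⟩
    have hq1 : 1 ≤ ‖pq.2‖ := le_trans hMr hqM
    set m := ⌊‖pq.2‖⌋₊ with hmdef
    have hMm : M ≤ m := Nat.le_floor hqM
    have hm1 : 1 ≤ m := le_trans hM hMm
    have hmle : (m:ℝ) ≤ ‖pq.2‖ := Nat.floor_le (norm_nonneg _)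
    have hmlt : ‖pq.2‖ < (m:ℝ)+1 := by exact_mod_cast Nat.lt_floor_add_one ‖pq.2‖
    have hΨm : Ψ m ≤ C₁ := hΨle m hm1
    have hpqn : ‖pq.1 * pq.2⁻¹‖ ≤ C₂ := by
      have h' : ‖pq.1*pq.2⁻¹‖ - ‖ξ‖ ≤ ‖ξ - pq.1*pq.2⁻¹‖ := by
        rw [norm_sub_rev]
        exact norm_sub_norm_le _ _
      rw [hC₂def]
      linarith
    refine mem_iUnion.2 ⟨m - M, ?_⟩
    rw [Nat.add_sub_cancel' hMm]
    refine Set.mem_iUnion₂.2 ⟨pq, ?_, ?_⟩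
    · rw [Finset.mem_product]
      constructor
      · rw [Set.Finite.mem_toFinset]
        refine ⟨hp, ?_⟩
        calc ‖pq.1‖ = ‖pq.1*pq.2⁻¹‖*‖pq.2‖ := by rw [← norm_mul, inv_mul_cancel_right₀ hq0]
          _ ≤ C₂ * ((m:ℝ)+1) := mul_le_mul hpqn hmlt.le (norm_nonneg _) hC₂0
      · rw [Set.Finite.mem_toFinset]
        exact ⟨hq, hmle, hmlt.le⟩
    · rw [mem_ball, dist_eq_norm]
      exact happ
  have hbound : ∀ M : ℕ, 1 ≤ M →
      volume (WSet Ψ ∩ closedBall 0 (N:ℝ)) ≤ ∑' k, f (k + M) := by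
    intro M hM
    calc volume (WSet Ψ ∩ closedBall 0 (N:ℝ))
        ≤ volume (⋃ k : ℕ, qkU C₂ (Ψ (M+k)) (M+k)) := measure_mono (hcover M hM)
      _ ≤ ∑' k, volume (qkU C₂ (Ψ (M+k)) (M+k)) := measure_iUnion_le _
      _ ≤ ∑' k, f (M+k) := ENNReal.tsum_le_tsum fun k => by
          have h := qkUvol C₂ hC₂0 (hΨ (M+k)).le (M+k) (le_trans hM (Nat.le_add_right M k))
          rw [hfdef]
          exact h
      _ = ∑' k, f (k + M) := tsum_congr fun k => by rw [add_comm]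
  have htail := ENNReal.tendsto_sum_nat_add f hfsum
  have hle0 : volume (WSet Ψ ∩ closedBall 0 (N:ℝ)) ≤ 0 :=
    ge_of_tendsto htail (eventually_atTop.2 ⟨1, fun M hM => hbound M hM⟩)
  exact le_antisymm hle0 zero_le

/-- Convergence part of Khintchine's theorem for quaternions. -/
theorem quaternionic_khintchine_convergence (Ψ : ℕ → ℝ) (hΨ : ∀ m, 0 < Ψ m)
    (hsum : Summable fun m : ℕ => Ψ m ^ 4 * (m : ℝ) ^ 7) :
    volume (WSet Ψ) = 0 := by
  have hsubU : WSet Ψ ⊆ ⋃ N : ℕ, (WSet Ψ ∩ closedBall 0 (N:ℝ)) := by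
    intro ξ hξ
    refine mem_iUnion.2 ⟨⌈‖ξ‖⌉₊, hξ, ?_⟩
    rw [mem_closedBall, dist_zero_right]
    exact Nat.le_ceil _
  refine le_antisymm ?_ zero_le
  calc volume (WSet Ψ) ≤ volume (⋃ N : ℕ, (WSet Ψ ∩ closedBall 0 (N:ℝ))) :=
        measure_mono hsubU
    _ ≤ ∑' N : ℕ, volume (WSet Ψ ∩ closedBall 0 (N:ℝ)) := measure_iUnion_le _
    _ = 0 := by simp [qk_key Ψ hΨ hsum]
end

section
/- For v > 2 and s > 8/v, the set 𝒲_v of quaternions ξ satisfying |ξ − p·q⁻¹|₂ < |q|₂^{-v} for infinitely many Hurwitz integer pairs (p,q), q ≠ 0, has Hausdorff s-measure zero; consequently dim_H(𝒲_v) ≤ 8/v. -/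
open MeasureTheory Metric Filter Set Quaternion
open scoped ENNReal NNReal Topology

/-- The set of `v`-approximable quaternions. -/
def WvSet (v : ℝ) : Set (Quaternion ℝ) :=
  {ξ | {pq : Quaternion ℝ × Quaternion ℝ | IsHurwitz pq.1 ∧ IsHurwitz pq.2 ∧ pq.2 ≠ 0 ∧
    ‖ξ - pq.1 * pq.2⁻¹‖ < ‖pq.2‖ ^ (-v)}.Infinite}

abbrev Z4 := ℤ × ℤ × ℤ × ℤ

noncomputable def iotaQ (m : Z4) : Quaternion ℝ :=
  ⟨(m.1 : ℝ)/2, (m.2.1 : ℝ)/2, (m.2.2.1 : ℝ)/2, (m.2.2.2 : ℝ)/2⟩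

lemma qnorm_sq (a : Quaternion ℝ) : ‖a‖ ^ 2 = normSq a := by
  rw [sq, ← normSq_eq_norm_mul_self]

lemma abs_re_le_norm (a : Quaternion ℝ) : |a.re| ≤ ‖a‖ := by
  have h : a.re ^ 2 ≤ ‖a‖ ^ 2 := by
    rw [qnorm_sq, normSq_def']; nlinarith [sq_nonneg a.imI, sq_nonneg a.imJ, sq_nonneg a.imK]
  calc |a.re| = Real.sqrt (a.re ^ 2) := (Real.sqrt_sq_eq_abs _).symm
    _ ≤ Real.sqrt (‖a‖ ^ 2) := Real.sqrt_le_sqrt h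
    _ = ‖a‖ := Real.sqrt_sq (norm_nonneg _)

lemma abs_imI_le_norm (a : Quaternion ℝ) : |a.imI| ≤ ‖a‖ := by
  have h : a.imI ^ 2 ≤ ‖a‖ ^ 2 := by
    rw [qnorm_sq, normSq_def']; nlinarith [sq_nonneg a.re, sq_nonneg a.imJ, sq_nonneg a.imK]
  calc |a.imI| = Real.sqrt (a.imI ^ 2) := (Real.sqrt_sq_eq_abs _).symm
    _ ≤ Real.sqrt (‖a‖ ^ 2) := Real.sqrt_le_sqrt h
    _ = ‖a‖ := Real.sqrt_sq (norm_nonneg _)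

lemma abs_imJ_le_norm (a : Quaternion ℝ) : |a.imJ| ≤ ‖a‖ := by
  have h : a.imJ ^ 2 ≤ ‖a‖ ^ 2 := by
    rw [qnorm_sq, normSq_def']; nlinarith [sq_nonneg a.re, sq_nonneg a.imI, sq_nonneg a.imK]
  calc |a.imJ| = Real.sqrt (a.imJ ^ 2) := (Real.sqrt_sq_eq_abs _).symm
    _ ≤ Real.sqrt (‖a‖ ^ 2) := Real.sqrt_le_sqrt h
    _ = ‖a‖ := Real.sqrt_sq (norm_nonneg _)

lemma abs_imK_le_norm (a : Quaternion ℝ) : |a.imK| ≤ ‖a‖ := by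
  have h : a.imK ^ 2 ≤ ‖a‖ ^ 2 := by
    rw [qnorm_sq, normSq_def']; nlinarith [sq_nonneg a.re, sq_nonneg a.imI, sq_nonneg a.imJ]
  calc |a.imK| = Real.sqrt (a.imK ^ 2) := (Real.sqrt_sq_eq_abs _).symm
    _ ≤ Real.sqrt (‖a‖ ^ 2) := Real.sqrt_le_sqrt h
    _ = ‖a‖ := Real.sqrt_sq (norm_nonneg _)

@[simp] lemma iotaQ_re (m : Z4) : (iotaQ m).re = (m.1 : ℝ)/2 := rfl
@[simp] lemma iotaQ_imI (m : Z4) : (iotaQ m).imI = (m.2.1 : ℝ)/2 := rfl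
@[simp] lemma iotaQ_imJ (m : Z4) : (iotaQ m).imJ = (m.2.2.1 : ℝ)/2 := rfl
@[simp] lemma iotaQ_imK (m : Z4) : (iotaQ m).imK = (m.2.2.2 : ℝ)/2 := rfl

lemma abs_coord_le_iotaQ (m : Z4) :
    |(m.1 : ℝ)| ≤ 2 * ‖iotaQ m‖ ∧ |(m.2.1 : ℝ)| ≤ 2 * ‖iotaQ m‖ ∧
    |(m.2.2.1 : ℝ)| ≤ 2 * ‖iotaQ m‖ ∧ |(m.2.2.2 : ℝ)| ≤ 2 * ‖iotaQ m‖ := by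
  have h1 := abs_re_le_norm (iotaQ m)
  have h2 := abs_imI_le_norm (iotaQ m)
  have h3 := abs_imJ_le_norm (iotaQ m)
  have h4 := abs_imK_le_norm (iotaQ m)
  simp only [iotaQ_re, iotaQ_imI, iotaQ_imJ, iotaQ_imK, abs_div, abs_two] at h1 h2 h3 h4
  exact ⟨by linarith, by linarith, by linarith, by linarith⟩

lemma norm_iotaQ_le (m : Z4) (n : ℝ) (hn : 0 ≤ n)
    (h1 : |(m.1:ℝ)| ≤ n) (h2 : |(m.2.1:ℝ)| ≤ n) (h3 : |(m.2.2.1:ℝ)| ≤ n)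
    (h4 : |(m.2.2.2:ℝ)| ≤ n) : ‖iotaQ m‖ ≤ n := by
  have hsq : ‖iotaQ m‖ ^ 2 ≤ n ^ 2 := by
    rw [qnorm_sq, normSq_def']
    simp only [iotaQ_re, iotaQ_imI, iotaQ_imJ, iotaQ_imK]
    have e1 : ((m.1:ℝ)/2)^2 ≤ (n/2)^2 := by
      rw [div_pow, div_pow]
      have : (m.1:ℝ)^2 ≤ n^2 := by nlinarith [sq_abs ((m.1:ℝ)), abs_nonneg ((m.1:ℝ))]
      linarith
    have e2 : ((m.2.1:ℝ)/2)^2 ≤ (n/2)^2 := by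
      rw [div_pow, div_pow]
      have : (m.2.1:ℝ)^2 ≤ n^2 := by nlinarith [sq_abs ((m.2.1:ℝ)), abs_nonneg ((m.2.1:ℝ))]
      linarith
    have e3 : ((m.2.2.1:ℝ)/2)^2 ≤ (n/2)^2 := by
      rw [div_pow, div_pow]
      have : (m.2.2.1:ℝ)^2 ≤ n^2 := by nlinarith [sq_abs ((m.2.2.1:ℝ)), abs_nonneg ((m.2.2.1:ℝ))]
      linarith
    have e4 : ((m.2.2.2:ℝ)/2)^2 ≤ (n/2)^2 := by
      rw [div_pow, div_pow]
      have : (m.2.2.2:ℝ)^2 ≤ n^2 := by nlinarith [sq_abs ((m.2.2.2:ℝ)), abs_nonneg ((m.2.2.2:ℝ))]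
      linarith
    nlinarith
  calc ‖iotaQ m‖ = Real.sqrt (‖iotaQ m‖^2) := (Real.sqrt_sq (norm_nonneg _)).symm
    _ ≤ Real.sqrt (n^2) := Real.sqrt_le_sqrt hsq
    _ = n := Real.sqrt_sq hn

lemma hurwitz_eq_iotaQ {x : Quaternion ℝ} (hx : IsHurwitz x) : ∃ m : Z4, iotaQ m = x := by
  rcases hx with ⟨a, b, c, d, h1, h2, h3, h4⟩ | ⟨a, b, c, d, h1, h2, h3, h4⟩
  · refine ⟨(2*a, 2*b, 2*c, 2*d), ?_⟩
    ext <;> simp [iotaQ, h1, h2, h3, h4] <;> push_cast <;> ring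
  · refine ⟨(2*a+1, 2*b+1, 2*c+1, 2*d+1), ?_⟩
    ext <;> simp [iotaQ, h1, h2, h3, h4] <;> push_cast <;> ring

lemma one_le_sq_half_int (a : ℤ) : (1/4 : ℝ) ≤ ((a:ℝ) + 1/2)^2 := by
  have h : (1:ℝ) ≤ ((2*a+1 : ℤ):ℝ)^2 := by
    have h0 : (2*a+1 : ℤ) ≠ 0 := by omega
    have h1 : (1:ℤ) ≤ (2*a+1)^2 := by nlinarith [sq_nonneg (2*a+1), Int.one_le_abs h0, sq_abs (2*a+1)]
    exact_mod_cast h1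
  push_cast at h
  nlinarith

lemma one_le_norm_hurwitz {q : Quaternion ℝ} (hq : IsHurwitz q) (hq0 : q ≠ 0) : 1 ≤ ‖q‖ := by
  have hsq : 1 ≤ ‖q‖^2 := by
    rw [qnorm_sq, normSq_def']
    rcases hq with ⟨a, b, c, d, h1, h2, h3, h4⟩ | ⟨a, b, c, d, h1, h2, h3, h4⟩
    · have hne : a ≠ 0 ∨ b ≠ 0 ∨ c ≠ 0 ∨ d ≠ 0 := by
        by_contra hcon
        push_neg at hcon
        obtain ⟨ha, hb, hc, hd⟩ := hcon
        apply hq0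
        ext <;> simp_all
      have key : ∀ e : ℤ, e ≠ 0 → (1:ℝ) ≤ (e:ℝ)^2 := by
        intro e he
        have : (1:ℤ) ≤ e^2 := by nlinarith [Int.one_le_abs he, sq_abs e]
        exact_mod_cast this
      rw [h1, h2, h3, h4]
      rcases hne with h | h | h | h
      · nlinarith [key a h, sq_nonneg ((b:ℝ)), sq_nonneg ((c:ℝ)), sq_nonneg ((d:ℝ))]
      · nlinarith [key b h, sq_nonneg ((a:ℝ)), sq_nonneg ((c:ℝ)), sq_nonneg ((d:ℝ))]
      · nlinarith [key c h, sq_nonneg ((a:ℝ)), sq_nonneg ((b:ℝ)), sq_nonneg ((d:ℝ))]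
      · nlinarith [key d h, sq_nonneg ((a:ℝ)), sq_nonneg ((b:ℝ)), sq_nonneg ((c:ℝ))]
    · rw [h1, h2, h3, h4]
      nlinarith [one_le_sq_half_int a, one_le_sq_half_int b, one_le_sq_half_int c,
        one_le_sq_half_int d]
  nlinarith [norm_nonneg q]

noncomputable def boxZ (n : ℕ) : Finset ℤ := Finset.Icc (-(n:ℤ)) n

noncomputable def box4 (n : ℕ) : Finset Z4 := boxZ n ×ˢ boxZ n ×ˢ boxZ n ×ˢ boxZ n

lemma mem_box4 {m : Z4} {n : ℕ} :
    m ∈ box4 n ↔ |m.1| ≤ (n:ℤ) ∧ |m.2.1| ≤ (n:ℤ) ∧ |m.2.2.1| ≤ (n:ℤ) ∧ |m.2.2.2| ≤ (n:ℤ) := by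
  simp [box4, boxZ, Finset.mem_product, Finset.mem_Icc, abs_le]

lemma box4_mono : Monotone box4 := by
  intro a b hab
  apply Finset.product_subset_product (Finset.Icc_subset_Icc (by exact_mod_cast neg_le_neg (Int.ofNat_le.mpr hab)) (by exact_mod_cast hab))
  apply Finset.product_subset_product (Finset.Icc_subset_Icc (by exact_mod_cast neg_le_neg (Int.ofNat_le.mpr hab)) (by exact_mod_cast hab))
  apply Finset.product_subset_product (Finset.Icc_subset_Icc (by exact_mod_cast neg_le_neg (Int.ofNat_le.mpr hab)) (by exact_mod_cast hab))
  exact Finset.Icc_subset_Icc (by exact_mod_cast neg_le_neg (Int.ofNat_le.mpr hab)) (by exact_mod_cast hab)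

lemma mem_box4_of_norm_le {m : Z4} {T : ℝ} (h : ‖iotaQ m‖ ≤ T) (hT : 0 ≤ T) :
    m ∈ box4 ⌈2*T⌉₊ := by
  obtain ⟨h1, h2, h3, h4⟩ := abs_coord_le_iotaQ m
  rw [mem_box4]
  have hc : (2*T : ℝ) ≤ (⌈2*T⌉₊ : ℝ) := Nat.le_ceil _
  refine ⟨?_, ?_, ?_, ?_⟩ <;>
  · rw [← @Int.cast_le ℝ]
    push_cast
    calc (|_| : ℝ) ≤ 2 * ‖iotaQ m‖ := by assumption
      _ ≤ 2*T := by linarith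
      _ ≤ _ := hc

lemma finite_hurwitz_bounded (B : ℝ) : {x : Quaternion ℝ | IsHurwitz x ∧ ‖x‖ ≤ B}.Finite := by
  rcases le_or_gt 0 B with hB | hB
  · apply Set.Finite.subset (((box4 ⌈2*B⌉₊).finite_toSet.image iotaQ))
    rintro x ⟨hx, hxB⟩
    obtain ⟨m, hm⟩ := hurwitz_eq_iotaQ hx
    exact ⟨m, Finset.mem_coe.mpr (mem_box4_of_norm_le (by rw [hm]; exact hxB) hB), hm⟩
  · convert Set.finite_empty
    ext x
    simp only [mem_setOf_eq, mem_empty_iff_false, iff_false]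
    rintro ⟨-, hx⟩
    exact absurd (le_trans (norm_nonneg x) hx) (not_le.mpr hB)

lemma norm_num_le {v : ℝ} (hv : 0 < v) {ξ p q : Quaternion ℝ} (hq : IsHurwitz q) (hq0 : q ≠ 0)
    (happ : ‖ξ - p * q⁻¹‖ < ‖q‖ ^ (-v)) : ‖p‖ ≤ (‖ξ‖ + 1) * ‖q‖ := by
  have h1 : 1 ≤ ‖q‖ := one_le_norm_hurwitz hq hq0
  have h2 : ‖q‖ ^ (-v) ≤ 1 := Real.rpow_le_one_of_one_le_of_nonpos h1 (by linarith)
  have h3 : ‖p * q⁻¹‖ ≤ ‖ξ‖ + 1 := by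
    have := norm_sub_le ξ (ξ - p * q⁻¹)
    rw [sub_sub_cancel] at this
    linarith
  have hp : p = p * q⁻¹ * q := by rw [mul_assoc, inv_mul_cancel₀ hq0, mul_one]
  calc ‖p‖ = ‖p * q⁻¹‖ * ‖q‖ := by rw [← norm_mul, ← hp]
    _ ≤ (‖ξ‖ + 1) * ‖q‖ := mul_le_mul_of_nonneg_right h3 (norm_nonneg q)

lemma exists_large_q {v : ℝ} (hv : 0 < v) {ξ : Quaternion ℝ} (hξ : ξ ∈ WvSet v) (M : ℝ) :
    ∃ p q : Quaternion ℝ, IsHurwitz p ∧ IsHurwitz q ∧ q ≠ 0 ∧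
      ‖ξ - p * q⁻¹‖ < ‖q‖ ^ (-v) ∧ M ≤ ‖q‖ := by
  by_contra hcon
  push_neg at hcon
  apply hξ
  apply Set.Finite.subset (Set.Finite.prod (finite_hurwitz_bounded ((‖ξ‖ + 1) * M))
    (finite_hurwitz_bounded M))
  rintro ⟨p, q⟩ ⟨hp, hq, hq0, happ⟩
  have hqM : ‖q‖ ≤ M := le_of_lt (hcon p q hp hq hq0 happ)
  refine ⟨⟨hp, ?_⟩, hq, hqM⟩
  calc ‖p‖ ≤ (‖ξ‖ + 1) * ‖q‖ := norm_num_le hv hq hq0 happ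
    _ ≤ (‖ξ‖ + 1) * M := by
        apply mul_le_mul_of_nonneg_left hqM
        positivity

noncomputable def g1 (u : ℝ) (c : ℤ) : ℝ := |(c:ℝ)| ^ (-u) + (if c = 0 then 1 else 0)

lemma g1_nonneg (u : ℝ) (c : ℤ) : 0 ≤ g1 u c := by
  unfold g1; positivity

lemma summable_g1 {u : ℝ} (hu : 1 < u) : Summable (g1 u) := by
  apply Summable.add (Real.summable_abs_int_rpow hu)
  apply summable_of_ne_finset_zero (s := {(0:ℤ)})
  intro c hc
  simp only [Finset.mem_singleton] at hc
  simp [hc]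

lemma max_one_rpow_le_g1 {u : ℝ} (hu : 0 < u) (c : ℤ) :
    (max 1 |(c:ℝ)|) ^ (-u) ≤ g1 u c := by
  rcases eq_or_ne c 0 with rfl | hc
  · simp [g1, Real.zero_rpow (by linarith : -u ≠ 0), Real.one_rpow]
  · have h1 : (1:ℝ) ≤ |(c:ℝ)| := by
      rw [← Int.cast_abs]
      exact_mod_cast Int.one_le_abs hc
    rw [max_eq_right h1]
    simp [g1, hc]

noncomputable def prodG (u : ℝ) (b : Z4) : ℝ :=
  g1 u b.1 * (g1 u b.2.1 * (g1 u b.2.2.1 * g1 u b.2.2.2))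

set_option maxHeartbeats 1000000 in
lemma summable_prodG {u : ℝ} (hu : 1 < u) : Summable (prodG u) := by
  have h := summable_g1 hu
  have h2 : Summable (fun p : ℤ × ℤ => g1 u p.1 * g1 u p.2) :=
    h.mul_of_nonneg h (g1_nonneg u) (g1_nonneg u)
  have h3 : Summable (fun p : ℤ × (ℤ × ℤ) => g1 u p.1 * (g1 u p.2.1 * g1 u p.2.2)) :=
    h.mul_of_nonneg h2 (g1_nonneg u) (fun p => mul_nonneg (g1_nonneg u p.1) (g1_nonneg u p.2))
  exact h.mul_of_nonneg h3 (g1_nonneg u)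
    (fun p => mul_nonneg (g1_nonneg u p.1)
      (mul_nonneg (g1_nonneg u p.2.1) (g1_nonneg u p.2.2)))

lemma norm_rpow_le_prodG {t : ℝ} (ht : 0 < t) {b : Z4} (hb : 1 ≤ ‖iotaQ b‖) :
    ‖iotaQ b‖ ^ (-t) ≤ 2 ^ t * prodG (t/4) b := by
  set u := t/4 with hu
  have hu0 : 0 < u := by positivity
  set m1 := max 1 |(b.1:ℝ)|
  set m2 := max 1 |(b.2.1:ℝ)|
  set m3 := max 1 |(b.2.2.1:ℝ)|
  set m4 := max 1 |(b.2.2.2:ℝ)|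
  set M := max (max m1 m2) (max m3 m4) with hM
  have h1M : (1:ℝ) ≤ M := le_trans (le_max_left 1 _) (le_trans (le_max_left m1 m2) (le_max_left _ _))
  have hMpos : (0:ℝ) < M := by linarith
  have hm1 : m1 ≤ M := le_trans (le_max_left m1 m2) (le_max_left _ _)
  have hm2 : m2 ≤ M := le_trans (le_max_right m1 m2) (le_max_left _ _)
  have hm3 : m3 ≤ M := le_trans (le_max_left m3 m4) (le_max_right _ _)
  have hm4 : m4 ≤ M := le_trans (le_max_right m3 m4) (le_max_right _ _)
  have hm1p : (0:ℝ) < m1 := lt_of_lt_of_le one_pos (le_max_left _ _)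
  have hm2p : (0:ℝ) < m2 := lt_of_lt_of_le one_pos (le_max_left _ _)
  have hm3p : (0:ℝ) < m3 := lt_of_lt_of_le one_pos (le_max_left _ _)
  have hm4p : (0:ℝ) < m4 := lt_of_lt_of_le one_pos (le_max_left _ _)
  -- ‖iotaQ b‖ ≥ M/2
  obtain ⟨c1, c2, c3, c4⟩ := abs_coord_le_iotaQ b
  have hM2 : M / 2 ≤ ‖iotaQ b‖ := by
    have e1 : m1 ≤ 2 * ‖iotaQ b‖ := max_le (by linarith) c1
    have e2 : m2 ≤ 2 * ‖iotaQ b‖ := max_le (by linarith) c2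
    have e3 : m3 ≤ 2 * ‖iotaQ b‖ := max_le (by linarith) c3
    have e4 : m4 ≤ 2 * ‖iotaQ b‖ := max_le (by linarith) c4
    have : M ≤ 2 * ‖iotaQ b‖ := max_le (max_le e1 e2) (max_le e3 e4)
    linarith
  have step1 : ‖iotaQ b‖ ^ (-t) ≤ (M/2) ^ (-t) :=
    Real.rpow_le_rpow_of_nonpos (by linarith) hM2 (by linarith)
  have step2 : (M/2 : ℝ) ^ (-t) = 2 ^ t * M ^ (-t) := by
    rw [Real.div_rpow (by linarith) (by norm_num), Real.rpow_neg (by norm_num : (0:ℝ) ≤ 2)]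
    rw [div_inv_eq_mul]
    ring
  have step3 : M ^ (-t) = M ^ (-u) * (M ^ (-u) * (M ^ (-u) * M ^ (-u))) := by
    rw [← Real.rpow_add hMpos, ← Real.rpow_add hMpos, ← Real.rpow_add hMpos]
    ring_nf
    rw [hu]; congr 1; ring
  have hMu : ∀ mi : ℝ, 0 < mi → mi ≤ M → M ^ (-u) ≤ mi ^ (-u) := fun mi h1 h2 =>
    Real.rpow_le_rpow_of_nonpos h1 h2 (by linarith)
  have g1b : m1 ^ (-u) ≤ g1 u b.1 := max_one_rpow_le_g1 hu0 _
  have g2b : m2 ^ (-u) ≤ g1 u b.2.1 := max_one_rpow_le_g1 hu0 _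
  have g3b : m3 ^ (-u) ≤ g1 u b.2.2.1 := max_one_rpow_le_g1 hu0 _
  have g4b : m4 ^ (-u) ≤ g1 u b.2.2.2 := max_one_rpow_le_g1 hu0 _
  have hMun : (0:ℝ) ≤ M ^ (-u) := Real.rpow_nonneg (by linarith) _
  have step4 : M ^ (-u) * (M ^ (-u) * (M ^ (-u) * M ^ (-u))) ≤ prodG u b := by
    unfold prodG
    have p1 := hMu m1 hm1p hm1
    have p2 := hMu m2 hm2p hm2
    have p3 := hMu m3 hm3p hm3
    have p4 := hMu m4 hm4p hm4
    have n1 : (0:ℝ) ≤ m1 ^ (-u) := Real.rpow_nonneg (le_of_lt hm1p) _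
    have n2 : (0:ℝ) ≤ m2 ^ (-u) := Real.rpow_nonneg (le_of_lt hm2p) _
    have n3 : (0:ℝ) ≤ m3 ^ (-u) := Real.rpow_nonneg (le_of_lt hm3p) _
    have n4 : (0:ℝ) ≤ m4 ^ (-u) := Real.rpow_nonneg (le_of_lt hm4p) _
    apply mul_le_mul (le_trans p1 g1b) _ (by positivity) (g1_nonneg u _)
    apply mul_le_mul (le_trans p2 g2b) _ (by positivity) (g1_nonneg u _)
    exact mul_le_mul (le_trans p3 g3b) (le_trans p4 g4b) (by positivity) (g1_nonneg u _)
  calc ‖iotaQ b‖ ^ (-t) ≤ (M/2) ^ (-t) := step1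
    _ = 2 ^ t * M ^ (-t) := step2
    _ = 2 ^ t * (M ^ (-u) * (M ^ (-u) * (M ^ (-u) * M ^ (-u)))) := by rw [step3]
    _ ≤ 2 ^ t * prodG u b := by
        apply mul_le_mul_of_nonneg_left step4
        positivity

open scoped Classical in
noncomputable def tset (v K : ℝ) (n : ℕ) (i : Z4 × Z4) : Set (Quaternion ℝ) :=
  if 2*((n:ℝ)+1) ≤ ‖iotaQ i.1‖ ∧ ‖iotaQ i.2‖ ≤ K * ‖iotaQ i.1‖ then
    ball (iotaQ i.2 * (iotaQ i.1)⁻¹) (‖iotaQ i.1‖ ^ (-v)) else ∅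

open scoped Classical in
noncomputable def FF (v s K : ℝ) (i : Z4 × Z4) : ℝ≥0∞ :=
  if 1 ≤ ‖iotaQ i.1‖ ∧ ‖iotaQ i.2‖ ≤ K * ‖iotaQ i.1‖ then
    ENNReal.ofReal ((2 * ‖iotaQ i.1‖ ^ (-v)) ^ s) else 0

lemma two_mul_ofReal (x : ℝ) : 2 * ENNReal.ofReal x = ENNReal.ofReal (2 * x) := by
  rw [ENNReal.ofReal_mul (by norm_num : (0:ℝ) ≤ 2), ENNReal.ofReal_ofNat]

lemma diam_ball_le_ofReal (c : Quaternion ℝ) (ρ : ℝ) :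
    ediam (ball c ρ) ≤ ENNReal.ofReal (2 * ρ) := by
  rw [← two_mul_ofReal, ← Metric.emetric_ball]
  exact ediam_eball_le

lemma diam_tset_le (v K : ℝ) (hv : 0 < v) (n : ℕ) (i : Z4 × Z4) :
    ediam (tset v K n i) ≤ ENNReal.ofReal (2 * (2*((n:ℝ)+1)) ^ (-v)) := by
  unfold tset
  split_ifs with h
  · refine le_trans (diam_ball_le_ofReal _ _) (ENNReal.ofReal_le_ofReal ?_)
    have hn : (0:ℝ) < 2*((n:ℝ)+1) := by positivity
    have := Real.rpow_le_rpow_of_nonpos hn h.1 (by linarith : -v ≤ 0)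
    linarith
  · simp

lemma r_tendsto (v : ℝ) (hv : 0 < v) :
    Tendsto (fun n : ℕ => ENNReal.ofReal (2 * (2*((n:ℝ)+1)) ^ (-v))) atTop (𝓝 0) := by
  have h1 : Tendsto (fun n : ℕ => 2*((n:ℝ)+1)) atTop atTop := by
    apply Tendsto.const_mul_atTop (by norm_num : (0:ℝ) < 2)
    exact tendsto_atTop_add_const_right _ _ tendsto_natCast_atTop_atTop
  have h2 : Tendsto (fun n : ℕ => (2*((n:ℝ)+1)) ^ (-v)) atTop (𝓝 0) :=
    (tendsto_rpow_neg_atTop hv).comp h1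
  have h3 : Tendsto (fun n : ℕ => 2 * (2*((n:ℝ)+1)) ^ (-v)) atTop (𝓝 0) := by
    simpa using h2.const_mul 2
  simpa using ENNReal.tendsto_ofReal h3

lemma diam_pow_le_FF (v s K : ℝ) (hv : 0 < v) (hs0 : 0 < s) (n : ℕ) (i : Z4 × Z4) :
    ediam (tset v K n i) ^ s ≤ FF v s K i := by
  unfold tset FF
  split_ifs with h1 h2
  · calc ediam (ball (iotaQ i.2 * (iotaQ i.1)⁻¹) (‖iotaQ i.1‖ ^ (-v))) ^ s
        ≤ (ENNReal.ofReal (2 * ‖iotaQ i.1‖ ^ (-v))) ^ s :=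
          ENNReal.rpow_le_rpow (diam_ball_le_ofReal _ _) hs0.le
      _ = ENNReal.ofReal ((2 * ‖iotaQ i.1‖ ^ (-v)) ^ s) :=
          ENNReal.ofReal_rpow_of_nonneg (by positivity) hs0.le
  · exfalso
    apply h2
    have hn : (0:ℝ) ≤ (n:ℝ) := Nat.cast_nonneg n
    exact ⟨by linarith [h1.1], h1.2⟩
  · exact le_trans (le_of_eq (by rw [ediam_empty, ENNReal.zero_rpow_of_pos hs0]))
      zero_le
  · exact le_of_eq (by rw [ediam_empty, ENNReal.zero_rpow_of_pos hs0])

lemma tset_eq_empty (v K : ℝ) (n : ℕ) (i : Z4 × Z4) (hi : i ∈ box4 n ×ˢ box4 n) :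
    tset v K n i = ∅ := by
  unfold tset
  rw [if_neg]
  rintro ⟨h1, -⟩
  have hmem : i.1 ∈ box4 n := (Finset.mem_product.mp hi).1
  rw [mem_box4] at hmem
  have hle : ‖iotaQ i.1‖ ≤ (n:ℝ) :=
    norm_iotaQ_le i.1 (n:ℝ) (Nat.cast_nonneg n) (by exact_mod_cast hmem.1)
      (by exact_mod_cast hmem.2.1) (by exact_mod_cast hmem.2.2.1)
      (by exact_mod_cast hmem.2.2.2)
  have hn : (0:ℝ) ≤ (n:ℝ) := Nat.cast_nonneg n
  linarith

lemma cover_lemma (v K : ℝ) (hv0 : 0 < v) (R : ℕ) (hKR : K = (R:ℝ)+1) (n : ℕ) :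
    WvSet v ∩ closedBall (0 : Quaternion ℝ) R ⊆ ⋃ i, tset v K n i := by
  rintro ξ ⟨hξW, hξB⟩
  obtain ⟨p, q, hp, hq, hq0, happ, hqlarge⟩ := exists_large_q hv0 hξW (2*((n:ℝ)+1))
  obtain ⟨b, hb⟩ := hurwitz_eq_iotaQ hq
  obtain ⟨a, ha⟩ := hurwitz_eq_iotaQ hp
  refine mem_iUnion.mpr ⟨(b, a), ?_⟩
  have hξR : ‖ξ‖ ≤ (R:ℝ) := by
    rw [mem_closedBall, dist_eq_norm, sub_zero] at hξB
    exact hξB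
  have hcond : 2*((n:ℝ)+1) ≤ ‖iotaQ b‖ ∧ ‖iotaQ a‖ ≤ K * ‖iotaQ b‖ := by
    constructor
    · rw [hb]; exact hqlarge
    · rw [ha, hb, hKR]
      calc ‖p‖ ≤ (‖ξ‖ + 1) * ‖q‖ := norm_num_le hv0 hq hq0 happ
        _ ≤ ((R:ℝ) + 1) * ‖q‖ := mul_le_mul_of_nonneg_right (by linarith) (norm_nonneg q)
  unfold tset
  rw [if_pos hcond, mem_ball, dist_eq_norm, ha, hb]
  exact happ

lemma real_bound (v s K : ℝ) (hv0 : 0 < v) (hs0 : 0 < s) (hK : 1 ≤ K) (hvs : 8 < v*s)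
    (b : Z4) (h1 : 1 ≤ ‖iotaQ b‖) :
    (7*(K*‖iotaQ b‖))^4 * (2 * ‖iotaQ b‖ ^ (-v)) ^ s
      ≤ ((7*K)^4 * 2^s) * (2^(v*s-4) * prodG ((v*s-4)/4) b) := by
  set x := ‖iotaQ b‖ with hx
  have x0 : (0:ℝ) < x := by linarith
  have ht0 : (0:ℝ) < v*s - 4 := by linarith
  have e1 : (2 * x ^ (-v)) ^ s = 2^s * x ^ (-(v*s)) := by
    rw [Real.mul_rpow (by norm_num) (Real.rpow_nonneg (by linarith) _),
      ← Real.rpow_mul x0.le]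
    rw [neg_mul]
  have e3 : x^(4:ℕ) * x ^ (-(v*s)) = x ^ (-(v*s-4)) := by
    rw [← Real.rpow_natCast x 4, ← Real.rpow_add x0]
    congr 1
    push_cast
    ring
  have key := norm_rpow_le_prodG ht0 (b := b) (by rw [← hx]; exact h1)
  rw [← hx] at key
  calc (7*(K*x))^4 * (2 * x ^ (-v)) ^ s
      = ((7*K)^4 * 2^s) * (x^(4:ℕ) * x ^ (-(v*s))) := by rw [e1]; ring
    _ = ((7*K)^4 * 2^s) * x ^ (-(v*s-4)) := by rw [e3]
    _ ≤ ((7*K)^4 * 2^s) * (2^(v*s-4) * prodG ((v*s-4)/4) b) := by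
        apply mul_le_mul_of_nonneg_left key
        positivity

lemma prodG_nonneg (u : ℝ) (b : Z4) : 0 ≤ prodG u b :=
  mul_nonneg (g1_nonneg u _) (mul_nonneg (g1_nonneg u _)
    (mul_nonneg (g1_nonneg u _) (g1_nonneg u _)))

lemma card_box4 (N : ℕ) : (box4 N).card = (2*N+1)^4 := by
  have h : (boxZ N).card = 2*N+1 := by
    rw [boxZ, Int.card_Icc]
    omega
  rw [box4, Finset.card_product, Finset.card_product, Finset.card_product, h]
  ring

set_option maxHeartbeats 1000000 in
lemma FF_tsum_ne_top (v s K : ℝ) (hv : 2 < v) (hs : 8/v < s) (hK : 1 ≤ K) :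
    ∑' i : Z4 × Z4, FF v s K i ≠ ⊤ := by
  have hv0 : 0 < v := by linarith
  have hs0 : 0 < s := lt_trans (by positivity) hs
  have hvs : 8 < v * s := by
    have h := (div_lt_iff₀ hv0).mp hs
    linarith
  have ht0 : (0:ℝ) < v*s-4 := by linarith
  have hu1 : 1 < (v*s-4)/4 := by linarith
  set D : ℝ := (7*K)^4 * 2^s with hD
  have hsum : Summable (fun b : Z4 => D * (2^(v*s-4) * prodG ((v*s-4)/4) b)) :=
    ((summable_prodG hu1).mul_left _).mul_left _
  have inner : ∀ b : Z4, ∑' a : Z4, FF v s K (b, a)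
      ≤ ENNReal.ofReal (D * (2^(v*s-4) * prodG ((v*s-4)/4) b)) := by
    intro b
    by_cases h1 : 1 ≤ ‖iotaQ b‖
    · set x := ‖iotaQ b‖ with hx
      have x0 : (0:ℝ) < x := lt_of_lt_of_le one_pos h1
      have hKx : 1 ≤ K * x := by nlinarith
      set N : ℕ := ⌈2*(K*x)⌉₊ with hN
      set c : ℝ≥0∞ := ENNReal.ofReal ((2 * x ^ (-v)) ^ s) with hc
      have hle : ∀ a : Z4, FF v s K (b, a) ≤ Set.indicator (↑(box4 N)) (fun _ => c) a := by
        intro a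
        unfold FF
        split_ifs with h
        · have hmem : a ∈ (box4 N : Set Z4) := by
            apply Finset.mem_coe.mpr
            rw [hN]
            exact mem_box4_of_norm_le h.2 (by positivity)
          rw [Set.indicator_of_mem hmem]
        · exact zero_le
      have hNle : (N:ℝ) ≤ 2*(K*x) + 1 := le_of_lt (Nat.ceil_lt_add_one (by positivity))
      have hcount : ((box4 N).card : ℝ) ≤ (7*(K*x))^4 := by
        rw [card_box4]
        push_cast
        have h2 : (2*(N:ℝ)+1) ≤ 7*(K*x) := by nlinarith
        have h2' : (0:ℝ) ≤ 2*(N:ℝ)+1 := by positivity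
        exact pow_le_pow_left₀ h2' h2 4
      calc ∑' a : Z4, FF v s K (b, a)
          ≤ ∑' a : Z4, Set.indicator (↑(box4 N)) (fun _ => c) a := ENNReal.tsum_le_tsum hle
        _ = ∑ a ∈ box4 N, Set.indicator (↑(box4 N)) (fun _ => c) a :=
            tsum_eq_sum (fun a ha => Set.indicator_of_notMem (by simpa using ha) _)
        _ = (box4 N).card • c := by
            rw [Finset.sum_congr rfl
              (fun a ha => Set.indicator_of_mem (Finset.mem_coe.mpr ha) _), Finset.sum_const]
        _ = ((box4 N).card : ℝ≥0∞) * c := nsmul_eq_mul _ _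
        _ ≤ ENNReal.ofReal ((7*(K*x))^4) * c := by
            apply mul_le_mul_left ?_ c
            rw [← ENNReal.ofReal_natCast]
            exact ENNReal.ofReal_le_ofReal hcount
        _ = ENNReal.ofReal ((7*(K*x))^4 * (2 * x ^ (-v)) ^ s) := by
            rw [hc, ← ENNReal.ofReal_mul (by positivity)]
        _ ≤ ENNReal.ofReal (D * (2^(v*s-4) * prodG ((v*s-4)/4) b)) :=
            ENNReal.ofReal_le_ofReal (by rw [hD]; exact real_bound v s K hv0 hs0 hK hvs b h1)
    · have hz : ∀ a : Z4, FF v s K (b, a) = 0 := by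
        intro a; unfold FF; rw [if_neg]; rintro ⟨h, -⟩; exact h1 h
      simp only [hz, tsum_zero]
      exact zero_le
  rw [ENNReal.tsum_prod']
  apply ne_top_of_le_ne_top ?_ (ENNReal.tsum_le_tsum inner)
  rw [← ENNReal.ofReal_tsum_of_nonneg
    (fun b => mul_nonneg (by positivity) (mul_nonneg (by positivity) (prodG_nonneg _ _))) hsum]
  exact ENNReal.ofReal_ne_top

def NfunI (i : Z4 × Z4) : ℕ :=
  i.1.1.natAbs ⊔ i.1.2.1.natAbs ⊔ i.1.2.2.1.natAbs ⊔ i.1.2.2.2.natAbs ⊔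
  i.2.1.natAbs ⊔ i.2.2.1.natAbs ⊔ i.2.2.2.1.natAbs ⊔ i.2.2.2.2.natAbs

lemma T_mono : Monotone (fun n : ℕ => box4 n ×ˢ box4 n) := fun a b hab =>
  Finset.product_subset_product (box4_mono hab) (box4_mono hab)

set_option maxHeartbeats 2000000 in
lemma mem_T_NfunI (i : Z4 × Z4) : i ∈ box4 (NfunI i) ×ˢ box4 (NfunI i) := by
  rw [Finset.mem_product, mem_box4, mem_box4]
  unfold NfunI
  simp only [Int.abs_eq_natAbs]
  omega

set_option maxHeartbeats 1000000 in
lemma T_tendsto : Tendsto (fun n : ℕ => box4 n ×ˢ box4 n) atTop atTop := by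
  apply tendsto_atTop_atTop_of_monotone T_mono
  intro F
  refine ⟨F.sup NfunI, fun i hi => ?_⟩
  exact T_mono (Finset.le_sup hi) (mem_T_NfunI i)

set_option maxHeartbeats 1000000 in
lemma key_measure_zero (v s : ℝ) (hv : 2 < v) (hs : 8/v < s) (R : ℕ) :
    μH[s] (WvSet v ∩ closedBall (0 : Quaternion ℝ) R) = 0 := by
  have hv0 : 0 < v := by linarith
  have hs0 : 0 < s := lt_trans (by positivity) hs
  set K : ℝ := (R:ℝ) + 1 with hK
  have hK1 : 1 ≤ K := by
    have : (0:ℝ) ≤ R := Nat.cast_nonneg R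
    rw [hK]; linarith
  have hμ := Measure.hausdorffMeasure_le_liminf_tsum (X := Quaternion ℝ) s
      (WvSet v ∩ closedBall 0 R)
      (fun n : ℕ => ENNReal.ofReal (2 * (2*((n:ℝ)+1)) ^ (-v))) (r_tendsto v hv0)
      (tset v K) (Eventually.of_forall fun n i => diam_tset_le v K hv0 n i)
      (Eventually.of_forall fun n => cover_lemma v K hv0 R hK n)
  refine le_antisymm (le_trans hμ ?_) zero_le
  have hbound : ∀ n : ℕ, (∑' i : Z4 × Z4, ediam (tset v K n i) ^ s)
      ≤ ∑' i : {i : Z4 × Z4 // i ∉ box4 n ×ˢ box4 n}, FF v s K i := by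
    intro n
    have heq : ∑' i : {i : Z4 × Z4 // i ∉ box4 n ×ˢ box4 n}, FF v s K i
        = ∑' i : Z4 × Z4, Set.indicator {i | i ∉ box4 n ×ˢ box4 n} (FF v s K) i :=
      tsum_subtype _ _
    rw [heq]
    apply ENNReal.tsum_le_tsum
    intro i
    by_cases hi : i ∈ box4 n ×ˢ box4 n
    · rw [tset_eq_empty v K n i hi]
      exact le_trans (le_of_eq (by rw [ediam_empty, ENNReal.zero_rpow_of_pos hs0]))
        zero_le
    · rw [Set.indicator_of_mem (by exact hi : i ∈ {i | i ∉ box4 n ×ˢ box4 n})]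
      exact diam_pow_le_FF v s K hv0 hs0 n i
  refine le_trans (liminf_le_liminf (Eventually.of_forall hbound)) ?_
  have htail := (ENNReal.tendsto_tsum_compl_atTop_zero
    (FF_tsum_ne_top v s K hv hs hK1)).comp T_tendsto
  have htail' : Tendsto (fun n : ℕ =>
      ∑' i : {i : Z4 × Z4 // i ∉ box4 n ×ˢ box4 n}, FF v s K i) atTop (𝓝 0) := htail
  rw [htail'.liminf_eq]

lemma Wv_measure_zero' (v s : ℝ) (hv : 2 < v) (hs : 8/v < s) : μH[s] (WvSet v) = 0 := by
  have hsub : WvSet v ⊆ ⋃ n : ℕ, WvSet v ∩ closedBall (0 : Quaternion ℝ) n := by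
    intro ξ hξ
    refine mem_iUnion.mpr ⟨⌈‖ξ‖⌉₊, hξ, ?_⟩
    rw [mem_closedBall, dist_eq_norm, sub_zero]
    exact Nat.le_ceil _
  refine le_antisymm (le_trans (measure_mono hsub) (le_of_eq ?_)) zero_le
  exact measure_iUnion_null fun n => key_measure_zero v s hv hs n

theorem quaternionic_JB_upper' (v s : ℝ) (hv : 2 < v) (hs : 8 / v < s) :
    μH[s] (WvSet v) = 0 ∧ dimH (WvSet v) ≤ ENNReal.ofReal (8 / v) := by
  have hv0 : 0 < v := by linarith
  refine ⟨Wv_measure_zero' v s hv hs, ?_⟩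
  apply ENNReal.le_of_forall_pos_le_add
  intro ε hε _
  have hε' : (0:ℝ) < (ε:ℝ) := hε
  set x : ℝ := 8/v + (ε:ℝ) with hxdef
  have hx0 : (0:ℝ) ≤ x := by positivity
  have hsx : 8/v < x := by rw [hxdef]; linarith
  have h0 : μH[x] (WvSet v) = 0 := Wv_measure_zero' v x hv hsx
  have hcoe : ((x.toNNReal : ℝ≥0) : ℝ) = x := Real.coe_toNNReal _ hx0
  have hdim : dimH (WvSet v) ≤ (x.toNNReal : ℝ≥0∞) := by
    apply dimH_le_of_hausdorffMeasure_ne_top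
    rw [hcoe, h0]
    exact ENNReal.zero_ne_top
  calc dimH (WvSet v) ≤ (x.toNNReal : ℝ≥0∞) := hdim
    _ = ENNReal.ofReal x := rfl
    _ = ENNReal.ofReal (8/v) + ENNReal.ofReal (ε:ℝ) := by
        rw [hxdef, ENNReal.ofReal_add (by positivity) hε'.le]
    _ = ENNReal.ofReal (8/v) + ε := by rw [ENNReal.ofReal_coe_nnreal]

/-- Upper bound part of the quaternionic Jarník–Besicovitch theorem. -/
theorem quaternionic_JB_upper (v s : ℝ) (hv : 2 < v) (hs : 8 / v < s) :
    μH[s] (WvSet v) = 0 ∧ dimH (WvSet v) ≤ ENNReal.ofReal (8 / v) :=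
  quaternionic_JB_upper' v s hv hs
end
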